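/- arXiv:2008.11441 — 6 statements merged into one kernel-verified Lean document; each statement's English description precedes it below -/
import Mathlib

section
/- Let A_1, …, A_m ∈ ℝ^{n×n}, let d ≥ 1 be an integer, let γ ≥ 0, and let p ∈ ℝ[x_1,…,x_n] be a homogeneous polynomial of degree 2d with p(x) > 0 for all x ≠ 0. If p(A_i x) ≤ γ^{2d} p(x) for all x ∈ ℝ^n and all i = 1,…,m, then ρ(𝒜) ≤ γ. -/
open MvPolynomial Filter

/-- Operator norm of a real matrix induced by the Euclidean norm on `ℝ^n`. -/
noncomputable def opNorm {n : ℕ} (A : Matrix (Fin n) (Fin n) ℝ) : ℝ :=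
  ‖LinearMap.toContinuousLinearMap (Matrix.toEuclideanLin A)‖

/-- Joint spectral radius of a family of matrices `A 0, …, A (m-1)`:
`ρ(𝒜) = limsup_{k→∞} max_{σ ∈ {1,…,m}^k} ‖A_{σ₁} ⋯ A_{σₖ}‖^{1/k}`. -/
noncomputable def jsr {n m : ℕ} (A : Fin m → Matrix (Fin n) (Fin n) ℝ) : ℝ :=
  Filter.limsup
    (fun k : ℕ => ⨆ σ : Fin k → Fin m,
      opNorm ((List.ofFn fun j => A (σ j)).prod) ^ (1 / (k : ℝ)))
    Filter.atTop

lemma eval_smul_homog {σ : Type*} [Fintype σ] {p : MvPolynomial σ ℝ} {N : ℕ}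
    (hp : p.IsHomogeneous N) (r : ℝ) (x : σ → ℝ) :
    eval (r • x) p = r ^ N * eval x p := by
  rw [eval_eq', eval_eq', Finset.mul_sum]
  apply Finset.sum_congr rfl
  intro d hd
  have hdeg : ∑ i, d i = N := by
    have h2 := hp (mem_support_iff.mp hd)
    rw [Finsupp.weight_apply] at h2
    rw [← h2, Finsupp.sum]
    rw [Finset.sum_subset (Finset.subset_univ d.support)]
    · simp
    · intro i _ hi
      simp [Finsupp.notMem_support_iff.mp hi]
  simp only [Pi.smul_apply, smul_eq_mul, mul_pow]
  rw [Finset.prod_mul_distrib, Finset.prod_pow_eq_pow_sum, hdeg]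
  ring

lemma limsup_aux (f : ℕ → ℝ) (hf : ∀ k, 0 ≤ f k) (K γ : ℝ) (hK : 0 < K) (hγ : 0 ≤ γ)
    (h : ∀ k : ℕ, 1 ≤ k → f k ≤ K ^ (1 / (k : ℝ)) * γ) :
    Filter.limsup f Filter.atTop ≤ γ := by
  set g : ℕ → ℝ := fun k => K ^ (1 / (k : ℝ)) * γ with hg
  have htend : Filter.Tendsto g Filter.atTop (nhds γ) := by
    have h1 : Filter.Tendsto (fun k : ℕ => (1 / (k : ℝ))) Filter.atTop (nhds 0) :=
      tendsto_one_div_atTop_nhds_zero_nat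
    have h2 : Filter.Tendsto (fun k : ℕ => K ^ (1 / (k : ℝ))) Filter.atTop (nhds 1) := by
      have := (Real.continuousAt_const_rpow (ne_of_gt hK)).tendsto.comp h1
      rw [Real.rpow_zero] at this
      exact this
    have := h2.mul_const γ
    simpa [hg] using this
  have hle : f ≤ᶠ[Filter.atTop] g := by
    filter_upwards [Filter.eventually_ge_atTop 1] with k hk using h k hk
  calc Filter.limsup f Filter.atTop ≤ Filter.limsup g Filter.atTop := by
        refine limsup_le_limsup hle ?_ ?_
        · have hb : Filter.IsBoundedUnder (· ≥ ·) Filter.atTop f :=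
            ⟨0, Filter.eventually_map.mpr (Filter.Eventually.of_forall hf)⟩
          exact hb.isCoboundedUnder_le
        · exact htend.isBoundedUnder_le
    _ = γ := htend.limsup_eq

/-- If `p` is a strictly positive form of degree `2d` with `p(Aᵢx) ≤ γ^{2d} p(x)` for all
`x` and all `i`, then `ρ(𝒜) ≤ γ`. -/
theorem stmt0 {n m : ℕ} (A : Fin m → Matrix (Fin n) (Fin n) ℝ) (d : ℕ) (hd : 1 ≤ d)
    (γ : ℝ) (hγ : 0 ≤ γ) (p : MvPolynomial (Fin n) ℝ)
    (hp : p.IsHomogeneous (2 * d))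
    (hpos : ∀ x : Fin n → ℝ, x ≠ 0 → 0 < MvPolynomial.eval x p)
    (hineq : ∀ (i : Fin m) (x : Fin n → ℝ),
      MvPolynomial.eval ((A i).mulVec x) p ≤ γ ^ (2 * d) * MvPolynomial.eval x p) :
    jsr A ≤ γ := by
  have h2d : (2 * d) ≠ 0 := by omega
  set E := EuclideanSpace ℝ (Fin n) with hE
  set e : E ≃L[ℝ] (Fin n → ℝ) := PiLp.continuousLinearEquiv 2 ℝ (fun _ : Fin n => ℝ) with he
  set f : E → ℝ := fun x => eval (e x) p with hf
  have hfc : Continuous f := (MvPolynomial.continuous_eval (p := p)).comp e.continuous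
  -- step 1: sandwich bounds
  obtain ⟨c, C, hc, hC, hcC⟩ : ∃ c C : ℝ, 0 < c ∧ 0 < C ∧
      ∀ x : E, c * ‖x‖ ^ (2 * d) ≤ f x ∧ f x ≤ C * ‖x‖ ^ (2 * d) := by
    have hzero : f 0 = 0 := by
      have h3 := eval_smul_homog hp 0 (e 0)
      simp only [zero_smul] at h3
      have h0 : (0:ℝ) ^ (2 * d) = 0 := zero_pow h2d
      rw [hf]
      simp only [map_zero]
      simpa [h0] using h3
    rcases Nat.eq_zero_or_pos n with hn | hn
    · subst hn
      refine ⟨1, 1, one_pos, one_pos, fun x => ?_⟩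
      have hx : x = 0 := e.injective (Subsingleton.elim _ _)
      subst hx
      simp [hzero, zero_pow h2d]
    · haveI : Nonempty (Fin n) := ⟨⟨0, hn⟩⟩
      haveI : Nontrivial E := by infer_instance
      have hcomp : IsCompact (Metric.sphere (0 : E) 1) := isCompact_sphere 0 1
      have hne : (Metric.sphere (0 : E) 1).Nonempty :=
        NormedSpace.sphere_nonempty.mpr zero_le_one
      obtain ⟨u, hu, humin'⟩ := hcomp.exists_isMinOn hne hfc.continuousOn
      obtain ⟨v, hv, hvmax'⟩ := hcomp.exists_isMaxOn hne hfc.continuousOn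
      have humin : ∀ w ∈ Metric.sphere (0 : E) 1, f u ≤ f w := fun w hw => humin' hw
      have hvmax : ∀ w ∈ Metric.sphere (0 : E) 1, f w ≤ f v := fun w hw => hvmax' hw
      have hue : e u ≠ 0 := by
        intro hcon
        have h4 : u = 0 := by
          apply e.injective
          simpa using hcon
        rw [h4] at hu
        simp at hu
      have hupos : 0 < f u := hpos _ hue
      have hvpos : 0 < f v := lt_of_lt_of_le hupos (humin v hv)
      refine ⟨f u, f v, hupos, hvpos, fun x => ?_⟩
      by_cases hx : x = 0
      · subst hx
        simp [hzero, zero_pow h2d]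
      · have hr : 0 < ‖x‖ := norm_pos_iff.mpr hx
        set w : E := ‖x‖⁻¹ • x with hw
        have hwsph : w ∈ Metric.sphere (0 : E) 1 := by
          simp only [mem_sphere_iff_norm, sub_zero, hw, norm_smul, norm_inv, norm_norm]
          rw [mem_sphere_zero_iff_norm, norm_smul, norm_inv, Real.norm_of_nonneg (norm_nonneg x), inv_mul_cancel₀ (ne_of_gt hr)]
        have hxw : x = ‖x‖ • w := by
          rw [hw, smul_smul, mul_inv_cancel₀ (ne_of_gt hr), one_smul]
        have hfx : f x = ‖x‖ ^ (2 * d) * f w := by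
          have hsm : f (‖x‖ • w) = ‖x‖ ^ (2 * d) * f w := by
            show eval (e (‖x‖ • w)) p = _
            rw [map_smul]
            exact eval_smul_homog hp _ _
          rw [← hxw] at hsm
          exact hsm
        constructor
        · rw [hfx, mul_comm]
          exact mul_le_mul_of_nonneg_left (humin w hwsph) (by positivity)
        · rw [hfx, mul_comm (f v) _]
          exact mul_le_mul_of_nonneg_left (hvmax w hwsph) (by positivity)
  -- step 2: product bound on polynomial evals
  have hprod : ∀ (L : List (Fin m)) (x : Fin n → ℝ),
      eval ((L.map A).prod.mulVec x) p ≤ (γ ^ (2 * d)) ^ L.length * eval x p := by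
    intro L
    induction L with
    | nil => intro x; simp [Matrix.one_mulVec]
    | cons i L ih =>
      intro x
      simp only [List.map_cons, List.prod_cons, List.length_cons]
      rw [← Matrix.mulVec_mulVec]
      calc eval ((A i).mulVec ((L.map A).prod.mulVec x)) p
          ≤ γ ^ (2 * d) * eval ((L.map A).prod.mulVec x) p := hineq i _
        _ ≤ γ ^ (2 * d) * ((γ ^ (2 * d)) ^ L.length * eval x p) :=
            mul_le_mul_of_nonneg_left (ih x) (by positivity)
        _ = (γ ^ (2 * d)) ^ (L.length + 1) * eval x p := by ring
  -- step 3: operator norm bound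
  set K : ℝ := (C / c) ^ ((2 * d : ℝ))⁻¹ with hK
  have hKpos : 0 < K := Real.rpow_pos_of_pos (div_pos hC hc) _
  have hKpow : K ^ (2 * d) = C / c := by
    rw [hK, ← Real.rpow_natCast ((C / c) ^ ((2 * d : ℝ))⁻¹) (2 * d),
      ← Real.rpow_mul (le_of_lt (div_pos hC hc))]
    rw [show ((2 * d : ℝ))⁻¹ * ((2 * d : ℕ) : ℝ) = 1 by
      push_cast
      field_simp]
    exact Real.rpow_one _
  have hop : ∀ (L : List (Fin m)), opNorm ((L.map A).prod) ≤ K * γ ^ L.length := by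
    intro L
    set P := (L.map A).prod with hP
    apply ContinuousLinearMap.opNorm_le_bound _ (by positivity)
    intro v
    simp only [LinearMap.coe_toContinuousLinearMap']
    set a := ‖Matrix.toEuclideanLin P v‖ with ha
    have hbound : a ^ (2 * d) ≤ (K * γ ^ L.length * ‖v‖) ^ (2 * d) := by
      have h1 : c * a ^ (2 * d) ≤ f (Matrix.toEuclideanLin P v) :=
        (hcC _).1
      have hev : f (Matrix.toEuclideanLin P v) = eval (P.mulVec (e v)) p := by
        rw [hf]
        rfl
      have h2 : eval (P.mulVec (e v)) p ≤ (γ ^ (2 * d)) ^ L.length * eval (e v) p :=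
        hprod L (e v)
      have h3 : eval (e v) p ≤ C * ‖v‖ ^ (2 * d) := (hcC v).2
      have h4 : c * a ^ (2 * d) ≤ (γ ^ (2 * d)) ^ L.length * (C * ‖v‖ ^ (2 * d)) := by
        calc c * a ^ (2 * d) ≤ eval (P.mulVec (e v)) p := hev ▸ h1
          _ ≤ (γ ^ (2 * d)) ^ L.length * eval (e v) p := h2
          _ ≤ (γ ^ (2 * d)) ^ L.length * (C * ‖v‖ ^ (2 * d)) :=
              mul_le_mul_of_nonneg_left h3 (by positivity)
      have h5 : (K * γ ^ L.length * ‖v‖) ^ (2 * d)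
          = (C / c) * ((γ ^ (2 * d)) ^ L.length * ‖v‖ ^ (2 * d)) := by
        rw [mul_pow, mul_pow, hKpow, ← pow_mul, ← pow_mul, Nat.mul_comm L.length (2 * d)]
        ring
      rw [h5]
      rw [div_mul_eq_mul_div, le_div_iff₀ hc]
      nlinarith [h4]
    exact le_of_pow_le_pow_left₀ h2d (by positivity) hbound
  -- step 4: conclude
  refine limsup_aux _ (fun k => ?_) K γ hKpos hγ (fun k hk => ?_)
  · apply Real.iSup_nonneg
    intro σ
    exact Real.rpow_nonneg (norm_nonneg _) _
  · 
    have hk0 : (k : ℝ) ≠ 0 := Nat.cast_ne_zero.mpr (by omega)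
    rcases isEmpty_or_nonempty (Fin k → Fin m) with hkm | hkm
    · rw [Real.iSup_of_isEmpty]
      positivity
    · apply ciSup_le
      intro σ
      have hofn : (List.ofFn fun j => A (σ j)) = (List.ofFn σ).map A := by
        rw [List.map_ofFn]
        rfl
      have hlen : (List.ofFn σ).length = k := List.length_ofFn
      have h6 : opNorm ((List.ofFn fun j => A (σ j)).prod) ≤ K * γ ^ k := by
        rw [hofn]
        calc opNorm (((List.ofFn σ).map A).prod) ≤ K * γ ^ (List.ofFn σ).length :=
              hop (List.ofFn σ)
          _ = K * γ ^ k := by rw [hlen]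
      calc opNorm ((List.ofFn fun j => A (σ j)).prod) ^ (1 / (k : ℝ))
          ≤ (K * γ ^ k) ^ (1 / (k : ℝ)) := by
            apply Real.rpow_le_rpow (norm_nonneg _) h6 (by positivity)
        _ = K ^ (1 / (k : ℝ)) * γ := by
            rw [Real.mul_rpow (le_of_lt hKpos) (by positivity)]
            congr 1
            rw [← Real.rpow_natCast γ k, ← Real.rpow_mul hγ]
            rw [show (k : ℝ) * (1 / (k : ℝ)) = 1 by field_simp]
            exact Real.rpow_one γ
end

section
/- Let A_1, …, A_m ∈ ℝ^{n×n}, let d ≥ 1 be an integer, and let γ ≥ 0. If there exists a homogeneous polynomial p ∈ ℝ[x_1,…,x_n] of degree 2d such that p(x) − (x_1² + ⋯ + x_n²)^d is SOS and γ^{2d} p(x) − p(A_i x) is SOS for every i = 1,…,m, then ρ(𝒜) ≤ γ. -/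
open MvPolynomial Filter

/-- The polynomial `p(Ax)`, obtained by substituting the linear forms `(Ax)_i` for `x_i`. -/
noncomputable def polyComp {n : ℕ} (p : MvPolynomial (Fin n) ℝ)
    (A : Matrix (Fin n) (Fin n) ℝ) : MvPolynomial (Fin n) ℝ :=
  MvPolynomial.aeval (fun i => ∑ j, MvPolynomial.C (A i j) * MvPolynomial.X j) p

/-- `f` is a sum of squares of homogeneous polynomials of degree `d`. -/
def IsSOSdeg {n : ℕ} (f : MvPolynomial (Fin n) ℝ) (d : ℕ) : Prop :=
  ∃ (t : ℕ) (g : Fin t → MvPolynomial (Fin n) ℝ),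
    (∀ i, (g i).IsHomogeneous d) ∧ f = ∑ i, (g i) ^ 2

lemma eval_smul_of_isHomogeneous {n k : ℕ} {p : MvPolynomial (Fin n) ℝ}
    (hp : p.IsHomogeneous k) (c : ℝ) (x : Fin n → ℝ) :
    eval (c • x) p = c ^ k * eval x p := by
  rw [eval_eq, eval_eq, Finset.mul_sum]
  refine Finset.sum_congr rfl fun d hd => ?_
  have hdeg : d.degree = k := by
    by_contra hne
    exact (mem_support_iff.mp hd) (hp.coeff_eq_zero hne)
  have key : ∏ i ∈ d.support, (c • x) i ^ d i = c ^ k * ∏ i ∈ d.support, x i ^ d i := by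
    calc ∏ i ∈ d.support, (c • x) i ^ d i
        = ∏ i ∈ d.support, (c ^ d i * x i ^ d i) := by
          refine Finset.prod_congr rfl fun i _ => ?_
          simp [mul_pow]
      _ = (∏ i ∈ d.support, c ^ d i) * ∏ i ∈ d.support, x i ^ d i := Finset.prod_mul_distrib
      _ = c ^ k * ∏ i ∈ d.support, x i ^ d i := by
          rw [Finset.prod_pow_eq_pow_sum, ← hdeg]; rfl
  rw [key]; ring

lemma eval_polyComp {n : ℕ} (p : MvPolynomial (Fin n) ℝ) (A : Matrix (Fin n) (Fin n) ℝ)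
    (x : Fin n → ℝ) : eval x (polyComp p A) = eval (A.mulVec x) p := by
  unfold polyComp
  rw [aeval_def, eval_eval₂]
  have h1 : (eval x).comp (algebraMap ℝ (MvPolynomial (Fin n) ℝ)) = RingHom.id ℝ := by
    ext r; simp
  rw [h1, eval₂_id]
  have h2 : (fun s => eval x (∑ j, C (A s j) * X j)) = A.mulVec x := by
    funext i
    simp [Matrix.mulVec, dotProduct]
  rw [h2]

lemma sos_eval_nonneg {n d : ℕ} {f : MvPolynomial (Fin n) ℝ} (hf : IsSOSdeg f d)
    (x : Fin n → ℝ) : 0 ≤ eval x f := by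
  obtain ⟨t, g, -, rfl⟩ := hf
  rw [map_sum]
  refine Finset.sum_nonneg fun i _ => ?_
  rw [map_pow]
  positivity

/-- If there is a form `p` of degree `2d` with `p(x) - ‖x‖₂^{2d}` SOS and
`γ^{2d} p(x) - p(Aᵢx)` SOS for every `i`, then `ρ(𝒜) ≤ γ`. -/
theorem stmt2 {n m : ℕ} (A : Fin m → Matrix (Fin n) (Fin n) ℝ) (d : ℕ) (hd : 1 ≤ d)
    (γ : ℝ) (hγ : 0 ≤ γ)
    (h : ∃ p : MvPolynomial (Fin n) ℝ, p.IsHomogeneous (2 * d) ∧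
      IsSOSdeg (p - (∑ j, MvPolynomial.X j ^ 2) ^ d) d ∧
      ∀ i, IsSOSdeg (γ ^ (2 * d) • p - polyComp p (A i)) d) :
    jsr A ≤ γ := by
  obtain ⟨p, hphom, hsos1, hsos2⟩ := h
  -- p dominates the Euclidean norm to the 2d
  have hpq : ∀ x : Fin n → ℝ, (∑ j, x j ^ 2) ^ d ≤ eval x p := by
    intro x
    have h0 := sos_eval_nonneg hsos1 x
    rw [map_sub] at h0
    have hq : eval x ((∑ j, X j ^ 2) ^ d) = (∑ j, x j ^ 2) ^ d := by
      rw [map_pow, map_sum]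
      simp
    linarith [hq ▸ h0]
  have hpnn : ∀ x : Fin n → ℝ, 0 ≤ eval x p := fun x =>
    le_trans (by positivity) (hpq x)
  -- contraction under each A i
  have hcontr : ∀ (i : Fin m) (x : Fin n → ℝ),
      eval ((A i).mulVec x) p ≤ γ ^ (2 * d) * eval x p := by
    intro i x
    have h0 := sos_eval_nonneg (hsos2 i) x
    rw [map_sub, smul_eval, eval_polyComp] at h0
    linarith
  -- contraction under products
  have hprod : ∀ (l : List (Fin m)) (x : Fin n → ℝ),
      eval (((l.map A).prod).mulVec x) p ≤ (γ ^ (2 * d)) ^ l.length * eval x p := by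
    intro l
    induction l with
    | nil => intro x; simp [Matrix.one_mulVec]
    | cons i l ih =>
      intro x
      rw [List.map_cons, List.prod_cons, ← Matrix.mulVec_mulVec]
      calc eval ((A i).mulVec (((l.map A).prod).mulVec x)) p
          ≤ γ ^ (2 * d) * eval (((l.map A).prod).mulVec x) p := hcontr i _
        _ ≤ γ ^ (2 * d) * ((γ ^ (2 * d)) ^ l.length * eval x p) := by
            have := ih x
            have hg : (0:ℝ) ≤ γ ^ (2 * d) := by positivity
            nlinarith [mul_le_mul_of_nonneg_left this hg]
        _ = (γ ^ (2 * d)) ^ (i :: l).length * eval x p := by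
            simp [List.length_cons, pow_succ]; ring
  -- upper bound for p on the sphere
  set f : EuclideanSpace ℝ (Fin n) → ℝ := fun y => eval (fun j => y j) p with hf
  have hfc : Continuous f := by
    have h1 : Continuous fun x : Fin n → ℝ => eval x p := MvPolynomial.continuous_eval p
    have h2 : Continuous fun y : EuclideanSpace ℝ (Fin n) => (fun j => y j : Fin n → ℝ) :=
      PiLp.continuous_ofLp 2 (fun _ : Fin n => ℝ)
    exact h1.comp h2
  have hbdd : BddAbove (f '' Metric.sphere (0 : EuclideanSpace ℝ (Fin n)) 1) :=
    ((isCompact_sphere 0 1).image hfc).bddAbove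
  set C : ℝ := max 1 (sSup (f '' Metric.sphere (0 : EuclideanSpace ℝ (Fin n)) 1)) with hCdef
  have hC1 : (1:ℝ) ≤ C := le_max_left _ _
  have hC0 : (0:ℝ) ≤ C := le_trans zero_le_one hC1
  have hCb : ∀ y : EuclideanSpace ℝ (Fin n), ‖y‖ = 1 → f y ≤ C := by
    intro y hy
    refine le_trans (le_csSup hbdd ⟨y, ?_, rfl⟩) (le_max_right _ _)
    simpa [Metric.mem_sphere, dist_eq_norm] using hy
  -- norm expressed via eval
  have hnormsq : ∀ y : EuclideanSpace ℝ (Fin n), ‖y‖ ^ (2 * d) = (∑ j, (y j) ^ 2) ^ d := by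
    intro y
    have h2 : ‖y‖ ^ 2 = ∑ j, (y j) ^ 2 := by
      rw [EuclideanSpace.norm_eq, Real.sq_sqrt (by positivity)]
      simp [Real.norm_eq_abs, sq_abs]
    rw [pow_mul, h2]
  have hlow : ∀ y : EuclideanSpace ℝ (Fin n), ‖y‖ ^ (2 * d) ≤ f y := by
    intro y
    rw [hnormsq y]
    exact hpq _
  have heval0 : eval (0 : Fin n → ℝ) p = 0 := by
    have := eval_smul_of_isHomogeneous hphom 0 0
    rw [zero_smul, zero_pow (by omega : 2 * d ≠ 0), zero_mul] at this
    exact this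
  have hCbound : ∀ y : EuclideanSpace ℝ (Fin n), f y ≤ C * ‖y‖ ^ (2 * d) := by
    intro y
    rcases eq_or_ne y 0 with rfl | hy
    · have hz : f (0 : EuclideanSpace ℝ (Fin n)) = 0 := heval0
      rw [hz]
      have : ‖(0 : EuclideanSpace ℝ (Fin n))‖ = 0 := norm_zero
      rw [this, zero_pow (by omega : 2 * d ≠ 0), mul_zero]
    · set u : EuclideanSpace ℝ (Fin n) := ‖y‖⁻¹ • y with hu
      have hyne : ‖y‖ ≠ 0 := norm_ne_zero_iff.mpr hy
      have hun : ‖u‖ = 1 := norm_smul_inv_norm hy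
      have hyu : (fun j => y j) = ‖y‖ • (fun j => u j) := by
        funext j
        simp only [hu, Pi.smul_apply, PiLp.smul_apply, smul_eq_mul]
        field_simp
      have : f y = ‖y‖ ^ (2 * d) * f u := by
        rw [hf]
        simp only
        rw [hyu, eval_smul_of_isHomogeneous hphom]
      rw [this]
      calc ‖y‖ ^ (2 * d) * f u ≤ ‖y‖ ^ (2 * d) * C :=
            mul_le_mul_of_nonneg_left (hCb u hun) (by positivity)
        _ = C * ‖y‖ ^ (2 * d) := mul_comm _ _
  -- the constant c
  set c : ℝ := C ^ (((2 * d : ℕ) : ℝ))⁻¹ with hc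
  have hc1 : (1:ℝ) ≤ c := Real.one_le_rpow hC1 (by positivity)
  have hc0 : (0:ℝ) < c := lt_of_lt_of_le zero_lt_one hc1
  have hcpow : c ^ (2 * d) = C := Real.rpow_inv_natCast_pow hC0 (by omega)
  -- operator norm bound
  have hop : ∀ (k : ℕ) (σ : Fin k → Fin m),
      opNorm ((List.ofFn fun j => A (σ j)).prod) ≤ γ ^ k * c := by
    intro k σ
    have hγc : (0:ℝ) ≤ γ ^ k * c := by positivity
    refine ContinuousLinearMap.opNorm_le_bound _ hγc ?_
    intro y
    set M := (List.ofFn fun j => A (σ j)).prod with hM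
    have happ : (fun j => ((Matrix.toEuclideanLin M) y) j) = M.mulVec (fun j => y j) := by
      funext j
      rfl
    have hMv : ‖(LinearMap.toContinuousLinearMap (Matrix.toEuclideanLin M)) y‖
        = ‖(Matrix.toEuclideanLin M) y‖ := rfl
    rw [hMv]
    have hlen : (List.ofFn fun j => A (σ j)).length = k := by simp
    have hMl : M = ((List.ofFn σ).map A).prod := by
      rw [hM, List.map_ofFn]
      rfl
    -- key chain in the 2d-th power
    have hchain : ‖(Matrix.toEuclideanLin M) y‖ ^ (2 * d) ≤ (γ ^ k * c * ‖y‖) ^ (2 * d) := by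
      calc ‖(Matrix.toEuclideanLin M) y‖ ^ (2 * d)
          ≤ f ((Matrix.toEuclideanLin M) y) := hlow _
        _ = eval (M.mulVec (fun j => y j)) p := by rw [hf]; simp only [happ]
        _ ≤ (γ ^ (2 * d)) ^ (List.ofFn σ).length * eval (fun j => y j) p := by
            rw [hMl]
            exact hprod (List.ofFn σ) _
        _ = (γ ^ (2 * d)) ^ k * f y := by rw [List.length_ofFn, hf]
        _ ≤ (γ ^ (2 * d)) ^ k * (C * ‖y‖ ^ (2 * d)) := by
            refine mul_le_mul_of_nonneg_left (hCbound y) (by positivity)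
        _ = (γ ^ k * c * ‖y‖) ^ (2 * d) := by
            rw [mul_pow, mul_pow, ← hcpow, ← pow_mul, ← pow_mul, Nat.mul_comm k (2*d)]
            ring
    have h2d : 2 * d ≠ 0 := by omega
    have := (pow_le_pow_iff_left₀ (norm_nonneg _) (by positivity) h2d).mp hchain
    exact this
  -- conclude via limsup
  set u : ℕ → ℝ := fun k => ⨆ σ : Fin k → Fin m,
      opNorm ((List.ofFn fun j => A (σ j)).prod) ^ (1 / (k : ℝ)) with hudef
  have hunn : ∀ k, 0 ≤ u k := by
    intro k
    exact Real.iSup_nonneg fun σ => Real.rpow_nonneg (norm_nonneg _) _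
  set g : ℕ → ℝ := fun k => γ * c ^ (1 / (k : ℝ)) with hgdef
  have hg : Tendsto g atTop (nhds γ) := by
    have h1 : Tendsto (fun k : ℕ => 1 / (k : ℝ)) atTop (nhds 0) :=
      tendsto_one_div_atTop_nhds_zero_nat
    have h2 : Tendsto (fun k : ℕ => c ^ (1 / (k : ℝ))) atTop (nhds 1) := by
      have := (Real.continuousAt_const_rpow (ne_of_gt hc0)).tendsto.comp h1
      simpa [Real.rpow_zero, Function.comp_def] using this
    have := h2.const_mul γ
    simpa [hgdef, one_div] using this
  have hug : ∀ᶠ k in atTop, u k ≤ g k := by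
    filter_upwards [eventually_ge_atTop 1] with k hk
    have hkne : (k : ℝ) ≠ 0 := Nat.cast_ne_zero.mpr (by omega)
    have hkpos : (0:ℝ) ≤ 1 / (k : ℝ) := by positivity
    refine Real.iSup_le (fun σ => ?_) (by positivity)
    have h1 : opNorm ((List.ofFn fun j => A (σ j)).prod) ^ (1 / (k : ℝ))
        ≤ (γ ^ k * c) ^ (1 / (k : ℝ)) :=
      Real.rpow_le_rpow (norm_nonneg _) (hop k σ) hkpos
    refine le_trans h1 (le_of_eq ?_)
    rw [Real.mul_rpow (by positivity) (le_of_lt hc0), ← Real.rpow_natCast γ k,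
      ← Real.rpow_mul hγ]
    rw [mul_one_div, div_self hkne, Real.rpow_one]
  have hgb : IsBoundedUnder (· ≤ ·) atTop g := hg.isBoundedUnder_le
  have hub : IsBoundedUnder (· ≤ ·) atTop u := hgb.mono_le hug
  have hcob : IsCoboundedUnder (· ≤ ·) atTop u :=
    isCoboundedUnder_le_of_eventually_le atTop (Eventually.of_forall hunn)
  calc jsr A = limsup u atTop := rfl
    _ ≤ limsup g atTop := limsup_le_limsup hug hcob hgb
    _ = γ := hg.limsup_eq
end

section
/- Let J ⊆ {1,…,n} and let A_1, …, A_m ∈ ℝ^{n×n} be matrices whose j-th column is zero for every j ∈ J. Let (p_s)_{s ≥ 0} be a sequence of polynomials in ℝ[x_1,…,x_n] such that supp(p_0) ⊆ {b_j : j ∈ {1,…,n}} and, for every s ≥ 1, supp(p_s) ⊆ supp(p_{s−1}) ∪ ⋃_{i=1}^m supp(p_{s−1}(A_i x)). Then for every s ≥ 0, supp(p_s) ⊆ Ñ^{n−|J|}_{2d} ∪ {b_j : j ∈ J}. -/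
open MvPolynomial

lemma degree_eq_sum_univ {n : ℕ} (α : Fin n →₀ ℕ) : α.degree = ∑ j, α j :=
  Finset.sum_subset (Finset.subset_univ _) (fun j _ hj => Finsupp.notMem_support_iff.mp hj)

/-- If the matrices `A i` all have zero `j`-th columns for `j ∈ J`, `supp(p₀)` is contained
in `{b_j : j ∈ [n]}` (where `b_j` is the exponent vector `2d·e_j`) and
`supp(p_s) ⊆ supp(p_{s-1}) ∪ ⋃ᵢ supp(p_{s-1}(Aᵢx))` for all `s ≥ 1`, then for every `s`,
`supp(p_s) ⊆ Ñ^{n-|J|}_{2d} ∪ {b_j : j ∈ J}`. -/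
theorem stmt3 {n : ℕ} (d : ℕ) (hd : 1 ≤ d) {m : ℕ}
    (A : Fin m → Matrix (Fin n) (Fin n) ℝ)
    (J : Finset (Fin n)) (hA : ∀ (i : Fin m), ∀ j ∈ J, ∀ l, A i l j = 0)
    (p : ℕ → MvPolynomial (Fin n) ℝ)
    (h0 : ∀ α ∈ (p 0).support, ∃ j : Fin n, α = Finsupp.single j (2 * d))
    (hs : ∀ s : ℕ, 1 ≤ s →
      (p s).support ⊆
        (p (s - 1)).support ∪
          Finset.univ.biUnion (fun i : Fin m => (polyComp (p (s - 1)) (A i)).support)) :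
    ∀ s : ℕ, ∀ α ∈ (p s).support,
      ((∑ j, α j) = 2 * d ∧ ∀ j ∈ J, α j = 0) ∨
      (∃ j ∈ J, α = Finsupp.single j (2 * d)) := by
  intro s
  induction s with
  | zero =>
    intro α hα
    obtain ⟨j, rfl⟩ := h0 α hα
    by_cases hj : j ∈ J
    · exact Or.inr ⟨j, hj, rfl⟩
    · refine Or.inl ⟨?_, ?_⟩
      · simp [Finsupp.single_apply]
      · intro j' hj'
        rw [Finsupp.single_apply, if_neg]
        rintro rfl; exact hj hj'
  | succ s ih =>
    intro α hα
    have hmem := hs (s + 1) (by omega) hα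
    rw [Nat.add_sub_cancel] at hmem
    rcases Finset.mem_union.mp hmem with h | h
    · exact ih α h
    · obtain ⟨i, -, hi⟩ := Finset.mem_biUnion.mp h
      left
      -- `p s` is homogeneous of degree `2*d`
      have hhom : (p s).IsHomogeneous (2 * d) := by
        intro β hβ
        have hdeg : (∑ j, β j) = 2 * d := by
          rcases ih β (MvPolynomial.mem_support_iff.mpr hβ) with ⟨h1, -⟩ | ⟨j, hj, rfl⟩
          · exact h1
          · simp [Finsupp.single_apply]
        rw [show (1 : Fin n → ℕ) = fun _ => 1 from rfl, ← Finsupp.degree_eq_weight_one, degree_eq_sum_univ, hdeg]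
      have hg : ∀ l, ((fun l => ∑ j, MvPolynomial.C ((A i) l j) * MvPolynomial.X j :
          Fin n → MvPolynomial (Fin n) ℝ) l).IsHomogeneous 1 := fun l =>
        MvPolynomial.IsHomogeneous.sum _ _ _ fun j _ => isHomogeneous_C_mul_X _ _
      have hcomp : (polyComp (p s) (A i)).IsHomogeneous (1 * (2 * d)) :=
        hhom.aeval _ hg
      constructor
      · have := hcomp (MvPolynomial.mem_support_iff.mp hi)
        rw [show (1 : Fin n → ℕ) = fun _ => 1 from rfl, ← Finsupp.degree_eq_weight_one, degree_eq_sum_univ, one_mul] at this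
        exact this
      · -- variables in `J` do not occur in `polyComp (p s) (A i)`
        intro j hj
        by_contra hne
        have hjvars : j ∈ (polyComp (p s) (A i)).vars :=
          (MvPolynomial.mem_vars j).mpr ⟨α, hi, Finsupp.mem_support_iff.mpr hne⟩
        obtain ⟨l, -, hl⟩ := MvPolynomial.mem_vars_bind₁ _ _ hjvars
        have hsub := MvPolynomial.vars_sum_subset (Finset.univ : Finset (Fin n))
          (fun j' => MvPolynomial.C ((A i) l j') * MvPolynomial.X j') hl
        obtain ⟨j', -, hj'⟩ := Finset.mem_biUnion.mp hsub
        rcases Finset.mem_union.mp (MvPolynomial.vars_mul _ _ hj') with hc | hx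
        · simp [MvPolynomial.vars_C] at hc
        · rw [MvPolynomial.vars_X, Finset.mem_singleton] at hx
          subst hx
          simp only [hA i j hj l] at hj'
          simp at hj'
end

section
/- Let G be a chordal graph on the vertex set V = {1,…,r} with maximal cliques C_1, …, C_t. If Q ∈ ℝ^{r×r} is a symmetric positive semidefinite matrix such that Q_{uv} = 0 whenever u ≠ v and {u,v} is not an edge of G, then there exist symmetric positive semidefinite matrices Q_1, …, Q_t ∈ ℝ^{r×r} with Q = Σ_{k=1}^t Q_k and, for each k, (Q_k)_{uv} = 0 unless both u ∈ C_k and v ∈ C_k. -/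
/-- A chord of a closed walk: an edge of `G` joining two vertices of the walk that is not
an edge of the walk itself (hence joins two nonconsecutive nodes when the walk is a cycle). -/
def HasChord {V : Type*} (G : SimpleGraph V) {v : V} (w : G.Walk v v) : Prop :=
  ∃ u₁ u₂ : V, u₁ ∈ w.support ∧ u₂ ∈ w.support ∧ G.Adj u₁ u₂ ∧ s(u₁, u₂) ∉ w.edges

/-- A graph is chordal if every cycle of length at least four has a chord. -/
def IsChordal {V : Type*} (G : SimpleGraph V) : Prop :=
  ∀ (v : V) (w : G.Walk v v), w.IsCycle → 4 ≤ w.length → HasChord G w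

/-- `C` is a maximal clique of `G`. -/
def IsMaxClique' {V : Type*} (G : SimpleGraph V) (C : Finset V) : Prop :=
  G.IsClique (C : Set V) ∧ ∀ D : Finset V, G.IsClique (D : Set V) → C ⊆ D → D = C

open Finset SimpleGraph Matrix
open scoped Matrix
open scoped Classical
set_option linter.unusedSectionVars false
set_option linter.unusedVariables false
set_option maxHeartbeats 1000000

namespace ChordalDecomp
variable {V : Type*} [Fintype V] [DecidableEq V]




def Reach (G : SimpleGraph V) (U : Finset V) (x y : V) : Prop :=
  ∃ w : G.Walk x y, ∀ z ∈ w.support, z ∈ U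

lemma Reach.refl {G : SimpleGraph V} {U : Finset V} {x : V} (hx : x ∈ U) : Reach G U x x :=
  ⟨Walk.nil, by simp [hx]⟩

lemma Reach.symm {G : SimpleGraph V} {U : Finset V} {x y : V} (h : Reach G U x y) :
    Reach G U y x := by
  obtain ⟨w, hw⟩ := h
  exact ⟨w.reverse, by simpa [Walk.support_reverse] using hw⟩

lemma Reach.trans {G : SimpleGraph V} {U : Finset V} {x y z : V} (h : Reach G U x y)
    (h' : Reach G U y z) : Reach G U x z := by
  obtain ⟨w, hw⟩ := h; obtain ⟨w', hw'⟩ := h'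
  refine ⟨w.append w', fun u hu => ?_⟩
  rcases (Walk.mem_support_append_iff _ _).1 hu with h | h
  · exact hw _ h
  · exact hw' _ h

lemma Reach.mem_right' {G : SimpleGraph V} {U : Finset V} {x y : V} (h : Reach G U x y) :
    y ∈ U := by
  obtain ⟨w, hw⟩ := h; exact hw _ w.end_mem_support

lemma Reach.adj {G : SimpleGraph V} {U : Finset V} {x y z : V} (h : Reach G U x y)
    (ha : G.Adj y z) (hz : z ∈ U) : Reach G U x z := by
  refine h.trans ⟨Walk.cons ha Walk.nil, ?_⟩
  intro u hu
  simp only [Walk.support_cons, Walk.support_nil, List.mem_cons, List.not_mem_nil, or_false] at hu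
  rcases hu with rfl | rfl
  · exact h.mem_right'
  · exact hz

lemma reach_of_mem_support {G : SimpleGraph V} {U : Finset V} {x y z : V} (w : G.Walk x y)
    (hw : ∀ u ∈ w.support, u ∈ U) (hz : z ∈ w.support) : Reach G U x z :=
  ⟨w.takeUntil z hz, fun u hu => hw _ (w.support_takeUntil_subset hz hu)⟩

lemma Reach.mem_left {G : SimpleGraph V} {U : Finset V} {x y : V} (h : Reach G U x y) : x ∈ U := by
  obtain ⟨w, hw⟩ := h; exact hw _ w.start_mem_support

lemma Reach.mem_right {G : SimpleGraph V} {U : Finset V} {x y : V} (h : Reach G U x y) : y ∈ U := by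
  obtain ⟨w, hw⟩ := h; exact hw _ w.end_mem_support


lemma exists_shortcut {G : SimpleGraph V} {x y : V} (p : G.Walk x y) :
    ∀ u v, u ∈ p.support → v ∈ p.support → G.Adj u v → s(u, v) ∉ p.edges →
    ∃ q : G.Walk x y, q.length < p.length ∧ ∀ z ∈ q.support, z ∈ p.support := by
  induction p with
  | nil =>
    intro u v hu hv hadj _
    simp only [Walk.support_nil, List.mem_singleton] at hu hv
    subst hu; subst hv; exact absurd hadj (G.irrefl)
  | @cons a x₁ y hax p ih =>
    intro u v hu hv hadj hne
    simp only [Walk.support_cons, List.mem_cons] at hu hv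
    have hedges : (Walk.cons hax p).edges = s(a, x₁) :: p.edges := Walk.edges_cons _ _
    -- helper for the case u = a, v ∈ p.support
    have main : ∀ (w : V), w ∈ p.support → G.Adj a w → s(a, w) ∉ (Walk.cons hax p).edges →
        ∃ q : G.Walk a y, q.length < (Walk.cons hax p).length ∧
          ∀ z ∈ q.support, z ∈ (Walk.cons hax p).support := by
      intro w hw haw hnw
      by_cases hwx : w = x₁
      · exfalso; apply hnw; rw [hedges, hwx]; exact List.mem_cons_self
      · refine ⟨Walk.cons haw (p.dropUntil w hw), ?_, ?_⟩
        · have hspec := p.take_spec hw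
          have hlen : (p.takeUntil w hw).length + (p.dropUntil w hw).length = p.length := by
            rw [← Walk.length_append, hspec]
          have hpos : 0 < (p.takeUntil w hw).length := by
            rcases Nat.eq_zero_or_pos (p.takeUntil w hw).length with h0 | h
            · exact absurd (Walk.eq_of_length_eq_zero h0).symm hwx
            · exact h
          simp only [Walk.length_cons]
          omega
        · intro z hz
          simp only [Walk.support_cons, List.mem_cons] at hz ⊢
          rcases hz with rfl | hz
          · exact Or.inl rfl
          · exact Or.inr (p.support_dropUntil_subset hw hz)
    rcases hu with rfl | hu <;> rcases hv with rfl | hv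
    · exact absurd hadj (G.irrefl)
    · exact main v hv hadj hne
    · exact main u hu hadj.symm (by rwa [Sym2.eq_swap] at hne)
    · have hnep : s(u, v) ∉ p.edges := fun h => hne (by rw [hedges]; exact List.mem_cons_of_mem _ h)
      obtain ⟨q, h1, h2⟩ := ih u v hu hv hadj hnep
      refine ⟨Walk.cons hax q, by simpa using h1, ?_⟩
      intro z hz
      simp only [Walk.support_cons, List.mem_cons] at hz ⊢
      rcases hz with rfl | hz
      · exact Or.inl rfl
      · exact Or.inr (h2 _ hz)

lemma adj_of_walk_support_pair {G : SimpleGraph V} {a b : V} (w : G.Walk a b) (hab : a ≠ b)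
    (h : ∀ z ∈ w.support, z = a ∨ z = b) : G.Adj a b := by
  cases w with
  | nil => exact absurd rfl hab
  | @cons _ x₁ _ hax p =>
    rcases h x₁ (by simp [Walk.support_cons, p.start_mem_support]) with rfl | rfl
    · exact absurd hax (G.irrefl)
    · exact hax

lemma adj_of_length_one {G : SimpleGraph V} {a b : V} (w : G.Walk a b) (h : w.length = 1) :
    G.Adj a b := by
  cases w with
  | nil => simp at h
  | @cons _ x₁ _ hax p =>
    simp only [Walk.length_cons, Nat.add_eq_right] at h
    have := Walk.eq_of_length_eq_zero h
    subst this; exact hax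




lemma exists_adj_component {G : SimpleGraph V} {U : Finset V} {a b t : V} (hat : a ≠ t)
    (w : G.Walk a b) (hsup : ∀ z ∈ w.support, z ∈ U ∨ z = t) (ht : t ∈ w.support) :
    ∃ u, u ∈ U ∧ G.Adj t u ∧ (∃ p : G.Walk a u, ∀ z ∈ p.support, z ∈ U) := by
  set q := w.takeUntil t ht with hqdef
  have hqs : ∀ z ∈ q.support, z ∈ U ∨ z = t := fun z hz =>
    hsup z (w.support_takeUntil_subset ht hz)
  have hc : q.support.count t = 1 := w.count_support_takeUntil_eq_one ht
  cases hq' : q.reverse with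
  | nil => exact absurd rfl hat
  | @cons _ u _ h' p =>
    have hsupeq : q.support.reverse = t :: p.support := by
      rw [← Walk.support_reverse, hq', Walk.support_cons]
    have hcount : (t :: p.support).count t = 1 := by
      rw [← hsupeq, List.count_reverse]; exact hc
    have htp : t ∉ p.support := by
      simp only [List.count_cons_self] at hcount
      exact List.count_eq_zero.1 (by omega)
    have hpU : ∀ z ∈ p.support, z ∈ U := by
      intro z hz
      have hzq : z ∈ q.support := by
        rw [← List.mem_reverse, hsupeq]; exact List.mem_cons_of_mem _ hz
      rcases hqs z hzq with h | rfl
      · exact h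
      · exact absurd hz htp
    have huU : u ∈ U := hpU _ p.start_mem_support
    refine ⟨u, huU, h', ⟨p.reverse, ?_⟩⟩
    intro z hz
    rw [Walk.support_reverse, List.mem_reverse] at hz
    exact hpU _ hz


lemma sep_clique {G : SimpleGraph V} (hG : IsChordal G) (A B : Finset V) {t1 t2 : V}
    (hAB : ∀ x ∈ A, ∀ y ∈ B, ¬G.Adj x y ∧ x ≠ y)
    (ht1A : t1 ∉ A) (ht2A : t2 ∉ A) (ht1B : t1 ∉ B) (ht2B : t2 ∉ B) (h12 : t1 ≠ t2)
    (connA : ∀ x ∈ A, ∀ y ∈ A, Reach G A x y)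
    (connB : ∀ x ∈ B, ∀ y ∈ B, Reach G B x y)
    (hA1 : ∃ u ∈ A, G.Adj t1 u) (hA2 : ∃ u ∈ A, G.Adj t2 u)
    (hB1 : ∃ u ∈ B, G.Adj t1 u) (hB2 : ∃ u ∈ B, G.Adj t2 u) :
    G.Adj t1 t2 := by
  classical
  by_contra hna
  have existsPath : ∀ (S : Finset V), (∀ x ∈ S, ∀ y ∈ S, Reach G S x y) →
      (∃ u ∈ S, G.Adj t1 u) → (∃ u ∈ S, G.Adj t2 u) →
      ∃ p : G.Walk t1 t2, p.IsPath ∧ ∀ z ∈ p.support, z ∈ S ∨ z = t1 ∨ z = t2 := by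
    rintro S hconn ⟨u1, hu1, ha1⟩ ⟨u2, hu2, ha2⟩
    obtain ⟨w0, hw0⟩ := hconn u1 hu1 u2 hu2
    set w : G.Walk t1 t2 := Walk.cons ha1 (w0.append (Walk.cons ha2.symm Walk.nil)) with hw
    refine ⟨w.bypass, w.bypass_isPath, ?_⟩
    intro z hz
    have hz' : z ∈ w.support := w.support_bypass_subset hz
    rw [hw, Walk.support_cons, List.mem_cons] at hz'
    rcases hz' with rfl | hz'
    · exact Or.inr (Or.inl rfl)
    · rw [Walk.mem_support_append_iff] at hz'
      rcases hz' with hz' | hz'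
      · exact Or.inl (hw0 _ hz')
      · simp only [Walk.support_cons, Walk.support_nil, List.mem_cons,
          List.mem_singleton, List.not_mem_nil, or_false] at hz'
        rcases hz' with rfl | rfl
        · exact Or.inl hu2
        · exact Or.inr (Or.inr rfl)
  -- minimal path through A
  obtain ⟨pa0, hpa0⟩ := existsPath A connA hA1 hA2
  obtain ⟨pb0, hpb0⟩ := existsPath B connB hB1 hB2
  have hexA : ∃ n, ∃ p : G.Walk t1 t2,
      (p.IsPath ∧ ∀ z ∈ p.support, z ∈ A ∨ z = t1 ∨ z = t2) ∧ p.length = n :=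
    ⟨pa0.length, pa0, hpa0, rfl⟩
  have hexB : ∃ n, ∃ p : G.Walk t1 t2,
      (p.IsPath ∧ ∀ z ∈ p.support, z ∈ B ∨ z = t1 ∨ z = t2) ∧ p.length = n :=
    ⟨pb0.length, pb0, hpb0, rfl⟩
  obtain ⟨p1, hp1, hp1len⟩ := Nat.find_spec hexA
  obtain ⟨p2, hp2, hp2len⟩ := Nat.find_spec hexB
  have hmin1 : ∀ q : G.Walk t1 t2,
      (q.IsPath ∧ ∀ z ∈ q.support, z ∈ A ∨ z = t1 ∨ z = t2) → p1.length ≤ q.length := by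
    intro q hq; rw [hp1len]; exact Nat.find_min' hexA ⟨q, hq, rfl⟩
  have hmin2 : ∀ q : G.Walk t1 t2,
      (q.IsPath ∧ ∀ z ∈ q.support, z ∈ B ∨ z = t1 ∨ z = t2) → p2.length ≤ q.length := by
    intro q hq; rw [hp2len]; exact Nat.find_min' hexB ⟨q, hq, rfl⟩
  obtain ⟨hp1path, hp1sup⟩ := hp1
  obtain ⟨hp2path, hp2sup⟩ := hp2
  -- lengths
  have hlen1 : 2 ≤ p1.length := by
    rcases Nat.lt_or_ge p1.length 2 with h | h
    · interval_cases h' : p1.length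
      · exact absurd (Walk.eq_of_length_eq_zero h') h12
      · exact absurd (adj_of_length_one p1 h') hna
    · exact h
  have hlen2 : 2 ≤ p2.length := by
    rcases Nat.lt_or_ge p2.length 2 with h | h
    · interval_cases h' : p2.length
      · exact absurd (Walk.eq_of_length_eq_zero h') h12
      · exact absurd (adj_of_length_one p2 h') hna
    · exact h
  -- shared support
  have hshared : ∀ z, z ∈ p1.support → z ∈ p2.support → z = t1 ∨ z = t2 := by
    intro z h1 h2
    rcases hp1sup z h1 with hzA | h | h
    · rcases hp2sup z h2 with hzB | h | h
      · exact absurd rfl (hAB z hzA z hzB).2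
      · exact Or.inl h
      · exact Or.inr h
    · exact Or.inl h
    · exact Or.inr h
  -- the cycle
  set c : G.Walk t1 t1 := p1.append p2.reverse with hc
  have hclen : c.length = p1.length + p2.length := by
    rw [hc, Walk.length_append, Walk.length_reverse]
  have hcedges : c.edges = p1.edges ++ p2.reverse.edges := by
    rw [hc, Walk.edges_append]
  have hmem2rev : ∀ z, z ∈ p2.reverse.support ↔ z ∈ p2.support := by
    intro z; rw [Walk.support_reverse, List.mem_reverse]
  have hcyc : c.IsCycle := by
    refine ⟨⟨⟨?_⟩, ?_⟩, ?_⟩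
    · -- edges nodup
      rw [hcedges]
      refine List.Nodup.append hp1path.isTrail.edges_nodup
        (hp2path.reverse.isTrail.edges_nodup) ?_
      intro e he1 he2
      induction e using Sym2.ind with
      | _ α β =>
        have he2' : s(α, β) ∈ p2.edges := by
          rwa [Walk.edges_reverse, List.mem_reverse] at he2
        have hadj : G.Adj α β := p1.adj_of_mem_edges he1
        have hα : α = t1 ∨ α = t2 :=
          hshared α (Walk.fst_mem_support_of_mem_edges p1 he1)
            (Walk.fst_mem_support_of_mem_edges p2 he2')
        have hβ : β = t1 ∨ β = t2 :=
          hshared β (Walk.snd_mem_support_of_mem_edges p1 he1)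
            (Walk.snd_mem_support_of_mem_edges p2 he2')
        rcases hα with rfl | rfl <;> rcases hβ with rfl | rfl
        · exact absurd hadj (G.irrefl)
        · exact hna hadj
        · exact hna hadj.symm
        · exact absurd hadj (G.irrefl)
    · -- c ≠ nil
      intro h
      have : c.length = 0 := by rw [h]; rfl
      omega
    · -- support tail nodup
      have htail : c.support.tail = p1.support.tail ++ p2.reverse.support.tail := by
        rw [hc, Walk.tail_support_append]
      rw [htail]
      have hn1 : p1.support.tail.Nodup := hp1path.support_nodup.tail
      have hn2 : p2.reverse.support.tail.Nodup := hp2path.reverse.support_nodup.tail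
      refine List.Nodup.append hn1 hn2 ?_
      intro z hz1 hz2
      have hz1' : z ∈ p1.support := List.mem_of_mem_tail hz1
      have hz2' : z ∈ p2.support := by
        rw [← hmem2rev]; exact List.mem_of_mem_tail hz2
      rcases hshared z hz1' hz2' with rfl | rfl
      · -- z = t1 : but t1 not in p1.support.tail
        have := hp1path.support_nodup
        rw [p1.support_eq_cons] at this
        exact (List.nodup_cons.1 this).1 hz1
      · -- z = t2 : t2 not in p2.reverse.support.tail
        have := hp2path.reverse.support_nodup
        rw [p2.reverse.support_eq_cons] at this
        exact (List.nodup_cons.1 this).1 hz2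
  obtain ⟨u₁, u₂, hu₁, hu₂, hadj, hne⟩ := hG t1 c hcyc (by omega)
  -- kill lemmas
  have kill1 : ¬(u₁ ∈ p1.support ∧ u₂ ∈ p1.support) := by
    rintro ⟨h1, h2⟩
    have hnedge : s(u₁, u₂) ∉ p1.edges := by
      intro h; exact hne (by rw [hcedges]; exact List.mem_append_left _ h)
    obtain ⟨q, hqlt, hqsub⟩ := exists_shortcut p1 u₁ u₂ h1 h2 hadj hnedge
    have : p1.length ≤ q.bypass.length :=
      hmin1 q.bypass ⟨q.bypass_isPath, fun z hz => hp1sup z (hqsub z (q.support_bypass_subset hz))⟩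
    have := q.length_bypass_le
    omega
  have kill2 : ¬(u₁ ∈ p2.support ∧ u₂ ∈ p2.support) := by
    rintro ⟨h1, h2⟩
    have hnedge : s(u₁, u₂) ∉ p2.edges := by
      intro h
      exact hne (by
        rw [hcedges]
        refine List.mem_append_right _ ?_
        rwa [Walk.edges_reverse, List.mem_reverse])
    obtain ⟨q, hqlt, hqsub⟩ := exists_shortcut p2 u₁ u₂ h1 h2 hadj hnedge
    have : p2.length ≤ q.bypass.length :=
      hmin2 q.bypass ⟨q.bypass_isPath, fun z hz => hp2sup z (hqsub z (q.support_bypass_subset hz))⟩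
    have := q.length_bypass_le
    omega
  have hmemc : ∀ z, z ∈ c.support → z ∈ p1.support ∨ z ∈ p2.support := by
    intro z hz
    rw [hc, Walk.mem_support_append_iff] at hz
    rcases hz with h | h
    · exact Or.inl h
    · exact Or.inr ((hmem2rev z).1 h)
  have ht1p1 : t1 ∈ p1.support := p1.start_mem_support
  have ht2p1 : t2 ∈ p1.support := p1.end_mem_support
  have ht1p2 : t1 ∈ p2.support := p2.start_mem_support
  have ht2p2 : t2 ∈ p2.support := p2.end_mem_support
  rcases hmemc _ hu₁ with h1 | h1 <;> rcases hmemc _ hu₂ with h2 | h2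
  · exact kill1 ⟨h1, h2⟩
  · -- u₁ ∈ p1, u₂ ∈ p2
    by_cases hx : u₂ ∈ p1.support
    · exact kill1 ⟨h1, hx⟩
    by_cases hy : u₁ ∈ p2.support
    · exact kill2 ⟨hy, h2⟩
    -- pure mixed
    have hu₁A : u₁ ∈ A := by
      rcases hp1sup _ h1 with h | rfl | rfl
      · exact h
      · exact absurd ht1p2 hy
      · exact absurd ht2p2 hy
    have hu₂B : u₂ ∈ B := by
      rcases hp2sup _ h2 with h | rfl | rfl
      · exact h
      · exact absurd ht1p1 hx
      · exact absurd ht2p1 hx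
    exact (hAB _ hu₁A _ hu₂B).1 hadj
  · -- symmetric mixed
    by_cases hx : u₁ ∈ p1.support
    · exact kill1 ⟨hx, h2⟩
    by_cases hy : u₂ ∈ p2.support
    · exact kill2 ⟨h1, hy⟩
    have hu₂A : u₂ ∈ A := by
      rcases hp1sup _ h2 with h | rfl | rfl
      · exact h
      · exact absurd ht1p2 hy
      · exact absurd ht2p2 hy
    have hu₁B : u₁ ∈ B := by
      rcases hp2sup _ h1 with h | rfl | rfl
      · exact h
      · exact absurd ht1p1 hx
      · exact absurd ht2p1 hx
    exact (hAB _ hu₂A _ hu₁B).1 hadj.symm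
  · exact kill2 ⟨h1, h2⟩

def SimpIn (G : SimpleGraph V) (S : Finset V) (v : V) : Prop :=
  v ∈ S ∧ ∀ u ∈ S, ∀ w ∈ S, G.Adj v u → G.Adj v w → u ≠ w → G.Adj u w

lemma dirac {G : SimpleGraph V} (hG : IsChordal G) :
    ∀ (n : ℕ) (S : Finset V), S.card ≤ n → S.Nonempty →
      (∃ v, SimpIn G S v) ∧
      (∀ a ∈ S, ∀ b ∈ S, a ≠ b → ¬G.Adj a b →
        ∃ v1 v2, SimpIn G S v1 ∧ SimpIn G S v2 ∧ v1 ≠ v2 ∧ ¬G.Adj v1 v2) := by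
  intro n
  induction n with
  | zero =>
    intro S hcard hne
    have := hne.card_pos
    omega
  | succ n ih =>
    intro S hcard hne
    have pair : ∀ a ∈ S, ∀ b ∈ S, a ≠ b → ¬G.Adj a b →
        ∃ v1 v2, SimpIn G S v1 ∧ SimpIn G S v2 ∧ v1 ≠ v2 ∧ ¬G.Adj v1 v2 := by
      intro a ha b hb hab hnadj
      set 𝒯 := (S \ {a, b}).powerset.filter
        (fun T => ¬∃ w : G.Walk a b, ∀ z ∈ w.support, z ∈ S \ T) with h𝒯
      have hT0 : (S \ {a, b}) ∈ 𝒯 := by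
        rw [h𝒯, Finset.mem_filter, Finset.mem_powerset]
        refine ⟨Finset.Subset.refl _, ?_⟩
        rintro ⟨w, hw⟩
        refine hnadj (adj_of_walk_support_pair w hab ?_)
        intro z hz
        obtain ⟨hzS, hz2⟩ := Finset.mem_sdiff.1 (hw z hz)
        by_contra hcon
        push_neg at hcon
        exact hz2 (Finset.mem_sdiff.2 ⟨hzS, by simp [hcon.1, hcon.2]⟩)
      obtain ⟨T, hT𝒯, hTmin⟩ := Finset.exists_min_image 𝒯 Finset.card ⟨_, hT0⟩
      rw [h𝒯, Finset.mem_filter, Finset.mem_powerset] at hT𝒯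
      obtain ⟨hTsub, hTsep⟩ := hT𝒯
      have haT : a ∉ T := fun h => by
        have := hTsub h; simp [Finset.mem_sdiff] at this
      have hbT : b ∉ T := fun h => by
        have := hTsub h; simp [Finset.mem_sdiff] at this
      have haST : a ∈ S \ T := Finset.mem_sdiff.2 ⟨ha, haT⟩
      have hbST : b ∈ S \ T := Finset.mem_sdiff.2 ⟨hb, hbT⟩
      have hnoreach : ¬Reach G (S \ T) a b := fun h => by
        obtain ⟨w, hw⟩ := h
        exact hTsep ⟨w, hw⟩
      set A := (S \ T).filter (fun x => Reach G (S \ T) a x) with hA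
      set B := (S \ T).filter (fun x => Reach G (S \ T) b x) with hB
      have hmemA : ∀ x, x ∈ A ↔ x ∈ S \ T ∧ Reach G (S \ T) a x := fun x => by
        rw [hA, Finset.mem_filter]
      have hmemB : ∀ x, x ∈ B ↔ x ∈ S \ T ∧ Reach G (S \ T) b x := fun x => by
        rw [hB, Finset.mem_filter]
      have haA : a ∈ A := (hmemA a).2 ⟨haST, Reach.refl haST⟩
      have hbB : b ∈ B := (hmemB b).2 ⟨hbST, Reach.refl hbST⟩
      have hABdisj : ∀ x ∈ A, ∀ y ∈ B, ¬G.Adj x y ∧ x ≠ y := by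
        intro x hx y hy
        obtain ⟨hx1, hx2⟩ := (hmemA x).1 hx
        obtain ⟨hy1, hy2⟩ := (hmemB y).1 hy
        constructor
        · intro hadj; exact hnoreach ((hx2.adj hadj hy1).trans hy2.symm)
        · rintro rfl; exact hnoreach (hx2.trans hy2.symm)
      have hclosedA : ∀ x ∈ A, ∀ y, y ∈ S \ T → G.Adj x y → y ∈ A := fun x hx y hy hadj =>
        (hmemA y).2 ⟨hy, ((hmemA x).1 hx).2.adj hadj hy⟩
      have hclosedB : ∀ x ∈ B, ∀ y, y ∈ S \ T → G.Adj x y → y ∈ B := fun x hx y hy hadj =>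
        (hmemB y).2 ⟨hy, ((hmemB x).1 hx).2.adj hadj hy⟩
      have hbA : b ∉ A := fun h => hnoreach ((hmemA b).1 h).2
      have haB : a ∉ B := fun h => hnoreach ((hmemB a).1 h).2.symm
      have hTA : ∀ t ∈ T, t ∉ A := fun t ht h =>
        (Finset.mem_sdiff.1 ((hmemA t).1 h).1).2 ht
      have hTB : ∀ t ∈ T, t ∉ B := fun t ht h =>
        (Finset.mem_sdiff.1 ((hmemB t).1 h).1).2 ht
      have hconnA : ∀ x ∈ A, ∀ y ∈ A, Reach G A x y := by
        intro x hx y hy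
        obtain ⟨hx1, hx2⟩ := (hmemA x).1 hx
        obtain ⟨hy1, hy2⟩ := (hmemA y).1 hy
        obtain ⟨w, hw⟩ := hx2.symm.trans hy2
        exact ⟨w, fun z hz => (hmemA z).2 ⟨hw z hz, hx2.trans (reach_of_mem_support w hw hz)⟩⟩
      have hconnB : ∀ x ∈ B, ∀ y ∈ B, Reach G B x y := by
        intro x hx y hy
        obtain ⟨hx1, hx2⟩ := (hmemB x).1 hx
        obtain ⟨hy1, hy2⟩ := (hmemB y).1 hy
        obtain ⟨w, hw⟩ := hx2.symm.trans hy2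
        exact ⟨w, fun z hz => (hmemB z).2 ⟨hw z hz, hx2.trans (reach_of_mem_support w hw hz)⟩⟩
      have hnbr : ∀ t ∈ T, (∃ u ∈ A, G.Adj t u) ∧ (∃ u ∈ B, G.Adj t u) := by
        intro t ht
        have herase : ∃ w : G.Walk a b, ∀ z ∈ w.support, z ∈ S \ (T.erase t) := by
          by_contra hsep
          have hmem : T.erase t ∈ 𝒯 := by
            rw [h𝒯, Finset.mem_filter, Finset.mem_powerset]
            exact ⟨(Finset.erase_subset _ _).trans hTsub, hsep⟩
          have h1 := hTmin _ hmem
          have h2 := Finset.card_erase_lt_of_mem ht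
          omega
        obtain ⟨w, hw⟩ := herase
        have hwsup : ∀ z ∈ w.support, z ∈ (S \ T) ∨ z = t := by
          intro z hz
          obtain ⟨hz1, hz2⟩ := Finset.mem_sdiff.1 (hw z hz)
          by_cases hzt : z = t
          · exact Or.inr hzt
          · exact Or.inl (Finset.mem_sdiff.2
              ⟨hz1, fun hzT => hz2 (Finset.mem_erase.2 ⟨hzt, hzT⟩)⟩)
        have htw : t ∈ w.support := by
          by_contra htw
          exact hTsep ⟨w, fun z hz =>
            (hwsup z hz).resolve_right (fun h => htw (h ▸ hz))⟩
        constructor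
        · have hat : a ≠ t := fun h => haT (h ▸ ht)
          obtain ⟨u, hu1, hu2, p, hp⟩ := exists_adj_component hat w hwsup htw
          exact ⟨u, (hmemA u).2 ⟨hu1, ⟨p, hp⟩⟩, hu2⟩
        · have hbt : b ≠ t := fun h => hbT (h ▸ ht)
          have htwr : t ∈ w.reverse.support := by
            rwa [Walk.support_reverse, List.mem_reverse]
          obtain ⟨u, hu1, hu2, p, hp⟩ := exists_adj_component hbt w.reverse
            (fun z hz => hwsup z (by rwa [Walk.support_reverse, List.mem_reverse] at hz)) htwr
          exact ⟨u, (hmemB u).2 ⟨hu1, ⟨p, hp⟩⟩, hu2⟩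
      have hTclique : ∀ t1 ∈ T, ∀ t2 ∈ T, t1 ≠ t2 → G.Adj t1 t2 := by
        intro t1 ht1 t2 ht2 h12
        exact sep_clique hG A B hABdisj (hTA _ ht1) (hTA _ ht2) (hTB _ ht1) (hTB _ ht2) h12
          hconnA hconnB (hnbr t1 ht1).1 (hnbr t2 ht2).1 (hnbr t1 ht1).2 (hnbr t2 ht2).2
      have hTS : T ⊆ S := hTsub.trans (Finset.sdiff_subset)
      -- side lemma
      have side : ∀ (X : Finset V), (∀ x ∈ X, x ∈ S \ T) →
          (∀ x ∈ X, ∀ y, y ∈ S \ T → G.Adj x y → y ∈ X) →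
          X.Nonempty → (∃ z ∈ S, z ∉ X ∪ T) → ∃ v ∈ X, SimpIn G S v := by
        rintro X hXsub hXclosed ⟨x0, hx0⟩ ⟨z0, hz0S, hz0⟩
        have hXTsub : X ∪ T ⊆ S := by
          intro x hx
          rcases Finset.mem_union.1 hx with h | h
          · exact (Finset.mem_sdiff.1 (hXsub x h)).1
          · exact hTS h
        have hcard2 : (X ∪ T).card ≤ n := by
          have hss : X ∪ T ⊂ S := (Finset.ssubset_iff_of_subset hXTsub).2 ⟨z0, hz0S, hz0⟩
          have := Finset.card_lt_card hss
          omega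
        obtain ⟨hsingle, hpair⟩ := ih (X ∪ T) hcard2 ⟨x0, Finset.mem_union_left _ hx0⟩
        have hvX : ∃ v ∈ X, SimpIn G (X ∪ T) v := by
          by_cases hcomp : ∀ x ∈ X ∪ T, ∀ y ∈ X ∪ T, x ≠ y → G.Adj x y
          · exact ⟨x0, hx0, Finset.mem_union_left _ hx0,
              fun u hu w hw _ _ hne' => hcomp u hu w hw hne'⟩
          · push_neg at hcomp
            obtain ⟨x, hx, y, hy, hxy, hnxy⟩ := hcomp
            obtain ⟨v1, v2, hv1, hv2, hv12, hnv⟩ := hpair x hx y hy hxy hnxy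
            by_cases hv1X : v1 ∈ X
            · exact ⟨v1, hv1X, hv1⟩
            · have hv1T : v1 ∈ T := (Finset.mem_union.1 hv1.1).resolve_left hv1X
              have hv2X : v2 ∈ X := by
                rcases Finset.mem_union.1 hv2.1 with h | h
                · exact h
                · exact absurd (hTclique _ hv1T _ h hv12) hnv
              exact ⟨v2, hv2X, hv2⟩
        obtain ⟨v, hvX', hvsimp⟩ := hvX
        refine ⟨v, hvX', hXTsub hvsimp.1, ?_⟩
        intro u hu w hw hadju hadjw hne'
        have hmemXT : ∀ y ∈ S, G.Adj v y → y ∈ X ∪ T := by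
          intro y hy hadj
          by_cases hyT : y ∈ T
          · exact Finset.mem_union_right _ hyT
          · exact Finset.mem_union_left _
              (hXclosed v hvX' y (Finset.mem_sdiff.2 ⟨hy, hyT⟩) hadj)
        exact hvsimp.2 u (hmemXT u hu hadju) w (hmemXT w hw hadjw) hadju hadjw hne'
      obtain ⟨vA, hvA, hsimpA⟩ := side A (fun x hx => ((hmemA x).1 hx).1) hclosedA ⟨a, haA⟩
        ⟨b, hb, by simp [Finset.mem_union, hbA, hbT]⟩
      obtain ⟨vB, hvB, hsimpB⟩ := side B (fun x hx => ((hmemB x).1 hx).1) hclosedB ⟨b, hbB⟩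
        ⟨a, ha, by simp [Finset.mem_union, haB, haT]⟩
      exact ⟨vA, vB, hsimpA, hsimpB, (hABdisj vA hvA vB hvB).2, (hABdisj vA hvA vB hvB).1⟩
    constructor
    · by_cases hcomp : ∀ x ∈ S, ∀ y ∈ S, x ≠ y → G.Adj x y
      · obtain ⟨v, hv⟩ := hne
        exact ⟨v, hv, fun u hu w hw _ _ h => hcomp u hu w hw h⟩
      · push_neg at hcomp
        obtain ⟨x, hx, y, hy, hxy, hnxy⟩ := hcomp
        obtain ⟨v1, v2, h1, _, _, _⟩ := pair x hx y hy hxy hnxy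
        exact ⟨v1, h1⟩
    · exact pair

-- Matrix part
lemma psd_entry_sq {n : Type*} [Fintype n] {Q : Matrix n n ℝ} (hQ : Q.PosSemidef) (u v : n) :
    (Q u v) ^ 2 ≤ Q u u * Q v v := by
  obtain ⟨mB, Bm, hB⟩ := Matrix.posSemidef_iff_eq_sum_vecMulVec.1 hQ
  have hentry : ∀ x y, Q x y = ∑ k, Bm k x * Bm k y := by
    intro x y
    rw [hB]
    simp [Matrix.sum_apply, Matrix.vecMulVec_apply]
  rw [hentry u v, hentry u u, hentry v v]
  have := Finset.sum_mul_sq_le_sq_mul_sq Finset.univ (fun k => Bm k u) (fun k => Bm k v)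
  simpa [pow_two] using this

def SuppIn {n : Type*} (R : Matrix n n ℝ) (K : Finset n) : Prop :=
  ∀ u v, ¬(u ∈ K ∧ v ∈ K) → R u v = 0

def GoodDecomp (G : SimpleGraph V) (Q : Matrix V V ℝ) : Prop :=
  ∃ (m : ℕ) (R : Fin m → Matrix V V ℝ) (K : Fin m → Finset V),
    (∀ i, (R i).PosSemidef ∧ G.IsClique (↑(K i) : Set V) ∧ SuppIn (R i) (K i)) ∧ Q = ∑ i, R i

lemma decomp_main {G : SimpleGraph V} (hG : IsChordal G) :
    ∀ (n : ℕ) (Q : Matrix V V ℝ), Q.PosSemidef →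
      (∀ u v, u ≠ v → ¬G.Adj u v → Q u v = 0) →
      (Finset.univ.filter fun u => Q u u ≠ 0).card ≤ n → GoodDecomp G Q := by
  intro n
  induction n with
  | zero =>
    intro Q hQ hsp hcard
    have hdiag : ∀ u, Q u u = 0 := by
      intro u
      by_contra h
      have hmem : u ∈ Finset.univ.filter fun u => Q u u ≠ 0 := by simp [h]
      have := Finset.card_pos.2 ⟨u, hmem⟩
      omega
    have hQ0 : Q = 0 := by
      ext u v
      have h := psd_entry_sq hQ u v
      rw [hdiag u, hdiag v] at h
      simp only [Matrix.zero_apply]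
      nlinarith [sq_nonneg (Q u v)]
    refine ⟨0, fun i => i.elim0, fun i => i.elim0, fun i => i.elim0, ?_⟩
    simp [hQ0]
  | succ n ih =>
    intro Q hQ hsp hcard
    set S := Finset.univ.filter (fun u => Q u u ≠ 0) with hSdef
    by_cases hSne : S.Nonempty
    swap
    · refine ih Q hQ hsp ?_
      rw [Finset.not_nonempty_iff_eq_empty] at hSne
      rw [← hSdef, hSne]
      simp
    obtain ⟨v, hvS, hsimp⟩ := (dirac hG S.card S le_rfl hSne).1
    have hvv : Q v v ≠ 0 := (Finset.mem_filter.1 hvS).2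
    obtain ⟨mB, Bm, hB⟩ := Matrix.posSemidef_iff_eq_sum_vecMulVec.1 hQ
    have hentry : ∀ x y, Q x y = ∑ k, Bm k x * Bm k y := by
      intro x y
      rw [hB]
      simp [Matrix.sum_apply, Matrix.vecMulVec_apply]
    have hvnn : 0 ≤ Q v v := by
      rw [hentry]
      exact Finset.sum_nonneg fun k _ => mul_self_nonneg _
    have hvpos : 0 < Q v v := lt_of_le_of_ne hvnn (Ne.symm hvv)
    set K := S.filter (fun u => u = v ∨ G.Adj v u) with hKdef
    have hvK : v ∈ K := by
      rw [hKdef, Finset.mem_filter]; exact ⟨hvS, Or.inl rfl⟩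
    have hclq : G.IsClique (↑K : Set V) := by
      intro x hx y hy hxy
      obtain ⟨hxS, hx2⟩ := Finset.mem_filter.1 (Finset.mem_coe.1 hx)
      obtain ⟨hyS, hy2⟩ := Finset.mem_filter.1 (Finset.mem_coe.1 hy)
      rcases hx2 with rfl | hx2 <;> rcases hy2 with rfl | hy2
      · exact absurd rfl hxy
      · exact hy2
      · exact hx2.symm
      · exact hsimp x hxS y hyS hx2 hy2 hxy
    have hcol : ∀ u, Q u v ≠ 0 → u ∈ K := by
      intro u h
      by_cases huv : u = v
      · subst huv; exact hvK
      · have hadj : G.Adj u v := by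
          by_contra hn; exact h (hsp u v huv hn)
        have huu : Q u u ≠ 0 := by
          intro h0
          have hb := psd_entry_sq hQ u v
          rw [h0] at hb
          exact h (by nlinarith [sq_nonneg (Q u v)])
        rw [hKdef, Finset.mem_filter]
        exact ⟨Finset.mem_filter.2 ⟨Finset.mem_univ _, huu⟩, Or.inr hadj.symm⟩
    set Q1 : Matrix V V ℝ := Matrix.of (fun u w => Q u v * Q w v / Q v v) with hQ1def
    have hQ1app : ∀ u w, Q1 u w = Q u v * Q w v / Q v v := fun u w => rfl
    have hsupp1 : SuppIn Q1 K := by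
      intro u w h
      rw [hQ1app]
      rcases not_and_or.1 h with h' | h'
      · rcases eq_or_ne (Q u v) 0 with h0 | h0
        · rw [h0]; ring
        · exact absurd (hcol u h0) h'
      · rcases eq_or_ne (Q w v) 0 with h0 | h0
        · rw [h0]; ring
        · exact absurd (hcol w h0) h'
    -- quadratic form identities
    have hq1quad : ∀ x : V → ℝ,
        x ⬝ᵥ (Q1 *ᵥ x) = (∑ u, x u * Q u v) ^ 2 / Q v v := by
      intro x
      have inner : ∀ u, (∑ w, Q1 u w * x w) = x ⬝ᵥ (fun w => Q w v) * (Q u v / Q v v) := by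
        intro u
        simp only [dotProduct]
        rw [Finset.sum_mul]
        apply Finset.sum_congr rfl
        intro w _
        rw [hQ1app]
        ring
      calc x ⬝ᵥ (Q1 *ᵥ x) = ∑ u, x u * (∑ w, Q1 u w * x w) := by
            simp [dotProduct, Matrix.mulVec]
        _ = ∑ u, x u * (x ⬝ᵥ (fun w => Q w v) * (Q u v / Q v v)) := by
            apply Finset.sum_congr rfl; intro u _; rw [inner]
        _ = (∑ u, x u * Q u v) * (x ⬝ᵥ (fun w => Q w v)) / Q v v := by
            rw [Finset.sum_mul, Finset.sum_div]
            apply Finset.sum_congr rfl; intro u _; ring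
        _ = (∑ u, x u * Q u v) ^ 2 / Q v v := by
            have : x ⬝ᵥ (fun w => Q w v) = ∑ u, x u * Q u v := by
              simp [dotProduct]
            rw [this]; ring
    have hquad : ∀ x : V → ℝ, x ⬝ᵥ (Q *ᵥ x) = ∑ k, (∑ u, Bm k u * x u) ^ 2 := by
      intro x
      calc x ⬝ᵥ (Q *ᵥ x) = ∑ u, x u * (∑ w, Q u w * x w) := by
            simp [dotProduct, Matrix.mulVec]
        _ = ∑ u, ∑ w, ∑ k, (Bm k u * x u) * (Bm k w * x w) := by
            apply Finset.sum_congr rfl; intro u _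
            rw [Finset.mul_sum]
            apply Finset.sum_congr rfl; intro w _
            rw [hentry, Finset.sum_mul, Finset.mul_sum]
            apply Finset.sum_congr rfl; intro k _
            ring
        _ = ∑ u, ∑ k, ∑ w, (Bm k u * x u) * (Bm k w * x w) := by
            apply Finset.sum_congr rfl; intro u _
            rw [Finset.sum_comm]
        _ = ∑ k, ∑ u, ∑ w, (Bm k u * x u) * (Bm k w * x w) := by
            rw [Finset.sum_comm]
        _ = ∑ k, (∑ u, Bm k u * x u) ^ 2 := by
            apply Finset.sum_congr rfl; intro k _
            rw [pow_two, Finset.sum_mul_sum]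
    have hcross : ∀ x : V → ℝ,
        ∑ u, x u * Q u v = ∑ k, (∑ u, Bm k u * x u) * Bm k v := by
      intro x
      calc ∑ u, x u * Q u v = ∑ u, ∑ k, (Bm k u * x u) * Bm k v := by
            apply Finset.sum_congr rfl; intro u _
            rw [hentry, Finset.mul_sum]
            apply Finset.sum_congr rfl; intro k _
            ring
        _ = ∑ k, ∑ u, (Bm k u * x u) * Bm k v := by rw [Finset.sum_comm]
        _ = ∑ k, (∑ u, Bm k u * x u) * Bm k v := by
            apply Finset.sum_congr rfl; intro k _
            rw [Finset.sum_mul]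
    have hQvvB : Q v v = ∑ k, (Bm k v) ^ 2 := by
      rw [hentry]
      apply Finset.sum_congr rfl; intro k _; ring
    have hstar : ∀ x : V → ℝ, star x = x := fun x => funext fun i => star_trivial _
    have hQ1psd : Q1.PosSemidef := by
      refine Matrix.PosSemidef.of_dotProduct_mulVec_nonneg ?_ ?_
      · ext i j
        simp only [Matrix.conjTranspose_apply, hQ1app, star_trivial]
        ring
      · intro x
        rw [hstar, hq1quad]
        positivity
    have hQ'psd : (Q - Q1).PosSemidef := by
      refine Matrix.PosSemidef.of_dotProduct_mulVec_nonneg ?_ ?_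
      · exact hQ.1.sub hQ1psd.1
      · intro x
        rw [hstar]
        have hmv : (Q - Q1) *ᵥ x = Q *ᵥ x - Q1 *ᵥ x := Matrix.sub_mulVec _ _ _
        rw [hmv, dotProduct_sub, hq1quad, hquad]
        have hcs := Finset.sum_mul_sq_le_sq_mul_sq Finset.univ
          (fun k => ∑ u, Bm k u * x u) (fun k => Bm k v)
        rw [← hcross x, ← hQvvB] at hcs
        rw [sub_nonneg, div_le_iff₀ hvpos]
        exact hcs
    have hsp' : ∀ u w, u ≠ w → ¬G.Adj u w → (Q - Q1) u w = 0 := by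
      intro u w hne hnadj
      have h0 : Q u w = 0 := hsp u w hne hnadj
      have h1 : Q1 u w = 0 := by
        rcases eq_or_ne (Q u v) 0 with h | h
        · rw [hQ1app, h]; ring
        rcases eq_or_ne (Q w v) 0 with h' | h'
        · rw [hQ1app, h']; ring
        · exact absurd (hclq (Finset.mem_coe.2 (hcol u h)) (Finset.mem_coe.2 (hcol w h')) hne)
            hnadj
      simp [Matrix.sub_apply, h0, h1]
    have hsub : (Finset.univ.filter fun u => (Q - Q1) u u ≠ 0) ⊆ S.erase v := by
      intro u hu
      have hne := (Finset.mem_filter.1 hu).2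
      rw [Finset.mem_erase]
      constructor
      · rintro rfl
        apply hne
        simp only [Matrix.sub_apply, hQ1app]
        rw [mul_div_assoc, div_self hvv, mul_one, sub_self]
      · by_contra huS
        have huu : Q u u = 0 := by
          by_contra h
          exact huS (Finset.mem_filter.2 ⟨Finset.mem_univ _, h⟩)
        have huv : Q u v = 0 := by
          have hb := psd_entry_sq hQ u v
          rw [huu] at hb
          nlinarith [sq_nonneg (Q u v)]
        apply hne
        simp [Matrix.sub_apply, hQ1app, huu, huv]
    have hcard' : (Finset.univ.filter fun u => (Q - Q1) u u ≠ 0).card ≤ n := by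
      have h1 := Finset.card_le_card hsub
      have h2 := Finset.card_erase_of_mem hvS
      have h3 := Finset.card_pos.2 ⟨v, hvS⟩
      omega
    obtain ⟨m, R, K', hRK, hsum⟩ := ih (Q - Q1) hQ'psd hsp' hcard'
    refine ⟨m + 1, Fin.cons Q1 R, Fin.cons K K', ?_, ?_⟩
    · intro i
      refine Fin.cases ?_ ?_ i
      · simp only [Fin.cons_zero]
        exact ⟨hQ1psd, hclq, hsupp1⟩
      · intro j
        simp only [Fin.cons_succ]
        exact hRK j
    · rw [Fin.sum_cons, ← hsum]
      abel

lemma exists_maxclique_superset (G : SimpleGraph V) (K : Finset V)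
    (hK : G.IsClique (↑K : Set V)) :
    ∃ D : Finset V, IsMaxClique' G D ∧ K ⊆ D := by
  obtain ⟨D, hD, hmax⟩ := Finset.exists_max_image
    ((Finset.univ.powerset).filter fun E : Finset V => G.IsClique (E : Set V) ∧ K ⊆ E) Finset.card
    ⟨K, Finset.mem_filter.2 ⟨Finset.mem_powerset.2 (Finset.subset_univ _), hK,
      Finset.Subset.refl _⟩⟩
  rw [Finset.mem_filter] at hD
  obtain ⟨-, hDclq, hKD⟩ := hD
  refine ⟨D, ⟨hDclq, ?_⟩, hKD⟩
  intro E hEclq hDE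
  have hE : E ∈ (Finset.univ.powerset).filter fun E : Finset V => G.IsClique (E : Set V) ∧ K ⊆ E :=
    Finset.mem_filter.2 ⟨Finset.mem_powerset.2 (Finset.subset_univ _), hEclq, hKD.trans hDE⟩
  exact (Finset.eq_of_subset_of_card_le hDE (hmax E hE)).symm

end ChordalDecomp

/-- Agler et al.: a PSD matrix with chordal sparsity pattern `G` decomposes as a sum of PSD
matrices supported on the maximal cliques of `G`. -/
theorem stmt5 {r t : ℕ} (G : SimpleGraph (Fin r)) (hG : IsChordal G)
    (C : Fin t → Finset (Fin r))
    (hmax : ∀ k, IsMaxClique' G (C k))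
    (hall : ∀ D : Finset (Fin r), IsMaxClique' G D → ∃ k, D = C k)
    (Q : Matrix (Fin r) (Fin r) ℝ) (hQ : Q.PosSemidef)
    (hsp : ∀ u v : Fin r, u ≠ v → ¬ G.Adj u v → Q u v = 0) :
    ∃ Qk : Fin t → Matrix (Fin r) (Fin r) ℝ,
      (∀ k, (Qk k).PosSemidef) ∧
      Q = ∑ k, Qk k ∧
      ∀ (k : Fin t) (u v : Fin r), ¬ (u ∈ C k ∧ v ∈ C k) → Qk k u v = 0 := by
  classical
  obtain ⟨m, R, K, hRK, hsum⟩ := ChordalDecomp.decomp_main hG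
    (Finset.univ.filter fun u => Q u u ≠ 0).card Q hQ hsp le_rfl
  choose hpsd hclq hsupp using hRK
  have hmaxsup : ∀ i, ∃ k : Fin t, K i ⊆ C k := by
    intro i
    obtain ⟨D, hD, hKD⟩ := ChordalDecomp.exists_maxclique_superset G (K i) (hclq i)
    obtain ⟨k, hk⟩ := hall D hD
    exact ⟨k, hk ▸ hKD⟩
  choose φ hφ using hmaxsup
  refine ⟨fun k => ∑ i ∈ Finset.univ.filter (fun i => φ i = k), R i, ?_, ?_, ?_⟩
  · intro k
    refine Finset.sum_induction _ _ (fun a b ha hb => ha.add hb) Matrix.PosSemidef.zero ?_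
    intro i _
    exact hpsd i
  · rw [hsum, ← Finset.sum_fiberwise Finset.univ φ R]
  · intro k u v h
    show (∑ i ∈ Finset.univ.filter (fun i => φ i = k), R i) u v = 0
    rw [Matrix.sum_apply]
    apply Finset.sum_eq_zero
    intro i hi
    have hik : φ i = k := (Finset.mem_filter.1 hi).2
    apply hsupp i
    rintro ⟨h1, h2⟩
    exact h ⟨(hik ▸ hφ i) h1, (hik ▸ hφ i) h2⟩
end

section
/- Let B = {β_1, …, β_r} ⊆ ℕ^n be a finite set of exponent vectors, let Ḡ be a chordal graph on {1,…,r} with maximal cliques C_1, …, C_t, and set B_k := {β_i : i ∈ C_k} for k = 1,…,t. For a polynomial f ∈ ℝ[x_1,…,x_n], the following are equivalent: (i) there exists a symmetric positive semidefinite matrix Q ∈ ℝ^{r×r} with Q_{uv} = 0 whenever u ≠ v and {u,v} is not an edge of Ḡ, such that f = Σ_{u,v=1}^{r} Q_{uv} x^{β_u + β_v}; (ii) there exist symmetric positive semidefinite matrices Q_k of size |C_k| (k = 1,…,t) such that f = Σ_{k=1}^t (x^{B_k})ᵀ Q_k x^{B_k}. -/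
open MvPolynomial

open SimpleGraph

variable {V : Type*} [Fintype V] [DecidableEq V] {G : SimpleGraph V}

def ind (G : SimpleGraph V) (S : Finset V) : SimpleGraph V where
  Adj u v := u ∈ S ∧ v ∈ S ∧ G.Adj u v
  symm := ⟨fun u v ⟨h1, h2, h3⟩ => ⟨h2, h1, h3.symm⟩⟩
  loopless := ⟨fun u ⟨_, _, h⟩ => G.loopless.irrefl u h⟩

lemma support_ind_subset {S : Finset V} : ∀ {u v : V} (w : (ind G S).Walk u v),
    u ∈ S → ∀ x ∈ w.support, x ∈ S := by
  intro u v w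
  induction w with
  | nil => intro hu x hx; simp at hx; subst hx; exact hu
  | cons h p ih =>
    intro hu x hx
    rw [SimpleGraph.Walk.support_cons, List.mem_cons] at hx
    rcases hx with rfl | hx
    · exact hu
    · exact ih h.2.1 x hx

lemma transfer_cond {S S' : Finset V} {u v : V} (w : (ind G S).Walk u v)
    (hsupp : ∀ x ∈ w.support, x ∈ S') : ∀ e ∈ w.edges, e ∈ (ind G S').edgeSet := by
  intro e he
  induction e with
  | h a b =>
    exact ⟨hsupp a (w.fst_mem_support_of_mem_edges he),
      hsupp b (w.snd_mem_support_of_mem_edges he), (w.adj_of_mem_edges he).2.2⟩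

lemma ind_le_cond {S : Finset V} {u v : V} (w : (ind G S).Walk u v) :
    ∀ e ∈ w.edges, e ∈ G.edgeSet := by
  intro e he
  induction e with
  | h a b => exact (w.adj_of_mem_edges he).2.2

lemma reach_of_mem_support {H : SimpleGraph V} {u v x : V} (w : H.Walk u v)
    (hx : x ∈ w.support) : H.Reachable u x := ⟨w.takeUntil x hx⟩

open scoped Classical in
noncomputable def comp (G : SimpleGraph V) (T : Finset V) (c : V) : Finset V :=
  T.filter (fun z => (ind G T).Reachable c z)

lemma mem_comp {T : Finset V} {c z : V} :
    z ∈ comp G T c ↔ z ∈ T ∧ (ind G T).Reachable c z := by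
  classical
  simp [comp]

lemma comp_adj_closed {T : Finset V} {c z u : V} (hz : z ∈ comp G T c)
    (hu : u ∈ T) (hadj : G.Adj z u) : u ∈ comp G T c := by
  rw [mem_comp] at hz ⊢
  have : (ind G T).Adj z u := ⟨hz.1, hu, hadj⟩
  exact ⟨hu, hz.2.trans this.reachable⟩

lemma edge_of_length_one {H : SimpleGraph V} {u v : V} (p : H.Walk u v) (h : p.length = 1) :
    s(u, v) ∈ p.edges := by
  cases p with
  | nil => simp at h
  | @cons _ m _ hadj q =>
    have h0 : q.length = 0 := by simpa using h
    have hmv : m = v := q.eq_of_length_eq_zero h0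
    subst hmv
    simp

lemma geodesic_adj_edge {H : SimpleGraph V} {x y : V} (p : H.Walk x y)
    (hlen : p.length = H.dist x y) {u₁ u₂ : V} (h1 : u₁ ∈ p.support) (h2 : u₂ ∈ p.support)
    (hadj : H.Adj u₁ u₂) : s(u₁, u₂) ∈ p.edges := by
  have hne : u₁ ≠ u₂ := hadj.ne
  have hspec : (p.takeUntil u₁ h1).append (p.dropUntil u₁ h1) = p := p.take_spec h1
  set q1 := p.takeUntil u₁ h1 with hq1
  set q2 := p.dropUntil u₁ h1 with hq2
  have hlen12 : q1.length + q2.length = p.length := by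
    rw [← hspec]; exact (Walk.length_append _ _).symm
  have h2' : u₂ ∈ q1.support ∨ u₂ ∈ q2.support := by
    rw [← hspec, Walk.mem_support_append_iff] at h2; exact h2
  rcases h2' with h2' | h2'
  · have hspec2 : (q1.takeUntil u₂ h2').append (q1.dropUntil u₂ h2') = q1 := q1.take_spec h2'
    set q3 := q1.takeUntil u₂ h2' with hq3
    set q4 := q1.dropUntil u₂ h2' with hq4
    have hl : q3.length + q4.length = q1.length := by
      rw [← hspec2]; exact (Walk.length_append _ _).symm
    have halt := H.dist_le (q3.append (Walk.cons hadj.symm q2))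
    rw [← hlen, Walk.length_append, Walk.length_cons] at halt
    have hq4len : q4.length = 1 := by
      have h1' : q4.length ≠ 0 := fun h0 => hne.symm (Walk.eq_of_length_eq_zero h0)
      omega
    have he : s(u₂, u₁) ∈ q4.edges := edge_of_length_one q4 hq4len
    have he2 : s(u₂, u₁) ∈ q1.edges := Walk.edges_dropUntil_subset q1 h2' he
    have he3 : s(u₂, u₁) ∈ p.edges := Walk.edges_takeUntil_subset p h1 he2
    rwa [Sym2.eq_swap] at he3
  · have hspec2 : (q2.takeUntil u₂ h2').append (q2.dropUntil u₂ h2') = q2 := q2.take_spec h2'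
    set q3 := q2.takeUntil u₂ h2' with hq3
    set q4 := q2.dropUntil u₂ h2' with hq4
    have hl : q3.length + q4.length = q2.length := by
      rw [← hspec2]; exact (Walk.length_append _ _).symm
    have halt := H.dist_le (q1.append (Walk.cons hadj q4))
    rw [← hlen, Walk.length_append, Walk.length_cons] at halt
    have hq3len : q3.length = 1 := by
      have h1' : q3.length ≠ 0 := fun h0 => hne (Walk.eq_of_length_eq_zero h0)
      omega
    have he : s(u₁, u₂) ∈ q3.edges := edge_of_length_one q3 hq3len
    have he2 : s(u₁, u₂) ∈ q2.edges := Walk.edges_takeUntil_subset q2 h2' he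
    exact Walk.edges_dropUntil_subset p h1 he2

lemma sep_neighbor {S X : Finset V} {a b x : V}
    (hX : X ⊆ S) (ha : a ∈ S \ X) (hx : x ∈ X)
    (hsep : ¬ (ind G (S \ X)).Reachable a b)
    (hreach : (ind G (S \ X.erase x)).Reachable a b) :
    ∃ u ∈ S \ X, G.Adj u x ∧ (ind G (S \ X)).Reachable a u := by
  have hT' : S \ X.erase x = insert x (S \ X) := by
    ext z
    simp only [Finset.mem_sdiff, Finset.mem_erase, Finset.mem_insert]
    constructor
    · rintro ⟨hzS, hz⟩
      by_cases hzx : z = x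
      · exact Or.inl hzx
      · exact Or.inr ⟨hzS, fun hzX => hz ⟨hzx, hzX⟩⟩
    · rintro (rfl | ⟨hzS, hzX⟩)
      · exact ⟨hX hx, fun h => h.1 rfl⟩
      · exact ⟨hzS, fun h => hzX h.2⟩
  rw [hT'] at hreach
  obtain ⟨w⟩ := hreach
  have hax : a ≠ x := fun h => (Finset.mem_sdiff.mp ha).2 (h ▸ hx)
  have haT' : a ∈ insert x (S \ X) := Finset.mem_insert_of_mem ha
  have hxw : x ∈ w.support := by
    by_contra hxs
    refine hsep ⟨w.transfer _ (transfer_cond w fun z hz => ?_)⟩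
    have hz1 := support_ind_subset w haT' z hz
    rcases Finset.mem_insert.mp hz1 with rfl | hz2
    · exact absurd hz hxs
    · exact hz2
  have hcount : (w.takeUntil x hxw).support.count x = 1 :=
    w.count_support_takeUntil_eq_one hxw
  set w1 := w.takeUntil x hxw with hw1
  have hcountr : w1.reverse.support.count x = 1 := by
    rw [Walk.support_reverse, List.count_reverse]; exact hcount
  cases hw : w1.reverse with
  | nil => exact absurd rfl hax.symm
  | @cons _ m _ h p =>
    have hmx : m ≠ x := fun hmx => (h.2.2.ne (hmx ▸ rfl)).elim
    have hsupp : w1.reverse.support = x :: p.support := by rw [hw, Walk.support_cons]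
    have hxp : x ∉ p.support := by
      rw [hsupp] at hcountr
      simp only [List.count_cons_self] at hcountr
      exact List.count_eq_zero.mp (by omega)
    have hmT' : m ∈ insert x (S \ X) := h.2.1
    have hmT : m ∈ S \ X := by
      rcases Finset.mem_insert.mp hmT' with rfl | h2
      · exact absurd rfl hmx
      · exact h2
    have hpT : ∀ z ∈ p.support, z ∈ S \ X := by
      intro z hz
      have hz1 := support_ind_subset p hmT' z hz
      rcases Finset.mem_insert.mp hz1 with rfl | hz2
      · exact absurd hz hxp
      · exact hz2
    exact ⟨m, hmT, h.2.2.symm, ⟨(p.transfer _ (transfer_cond p hpT)).reverse⟩⟩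

/-- a geodesic between two nonadjacent vertices through the component of `c`,
    transferred into `G`. -/
lemma comp_geodesic {T : Finset V} {c x y ua ua' : V}
    (hc : c ∈ T) (hxT : x ∉ T) (hyT : y ∉ T) (hxy : x ≠ y) (hnadj : ¬ G.Adj x y)
    (hua : ua ∈ comp G T c) (hua' : ua' ∈ comp G T c)
    (hax : G.Adj x ua) (hay : G.Adj ua' y) :
    ∃ p : (ind G (insert x (insert y (comp G T c)))).Walk x y,
      p.IsPath ∧ p.length = (ind G (insert x (insert y (comp G T c)))).dist x y ∧
      2 ≤ p.length := by
  set VA := insert x (insert y (comp G T c)) with hVA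
  set H := ind G VA with hH
  have hxVA : x ∈ VA := Finset.mem_insert_self _ _
  have hyVA : y ∈ VA := Finset.mem_insert_of_mem (Finset.mem_insert_self _ _)
  have hcompVA : ∀ z, z ∈ comp G T c → z ∈ VA := fun z hz =>
    Finset.mem_insert_of_mem (Finset.mem_insert_of_mem hz)
  have e1 : H.Adj x ua := ⟨hxVA, hcompVA _ hua, hax⟩
  have e2 : H.Adj ua' y := ⟨hcompVA _ hua', hyVA, hay⟩
  have hreachT : (ind G T).Reachable ua ua' :=
    ((mem_comp.mp hua).2.symm).trans (mem_comp.mp hua').2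
  obtain ⟨p0⟩ := hreachT
  have hp0supp : ∀ z ∈ p0.support, z ∈ VA := by
    intro z hz
    refine hcompVA _ (mem_comp.mpr ⟨support_ind_subset p0 (mem_comp.mp hua).1 z hz, ?_⟩)
    exact (mem_comp.mp hua).2.trans (reach_of_mem_support p0 hz)
  have hreachH : H.Reachable x y :=
    (e1.reachable.trans ⟨p0.transfer H (transfer_cond p0 hp0supp)⟩).trans e2.reachable
  obtain ⟨p, hpath, hdist⟩ := hreachH.exists_path_of_dist
  refine ⟨p, hpath, hdist, ?_⟩
  rcases Nat.lt_or_ge p.length 2 with hlt | hge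
  · interval_cases h : p.length
    · exact absurd (Walk.eq_of_length_eq_zero h) hxy
    · exact absurd (p.adj_of_mem_edges (edge_of_length_one p h)).2.2 hnadj
  · exact hge

lemma sep_clique (hG : IsChordal G) {S X : Finset V} {a b : V}
    (hX : X ⊆ S) (ha : a ∈ S \ X) (hb : b ∈ S \ X)
    (hsep : ¬ (ind G (S \ X)).Reachable a b)
    (hmin : ∀ x ∈ X, (ind G (S \ X.erase x)).Reachable a b) :
    ∀ x ∈ X, ∀ y ∈ X, x ≠ y → G.Adj x y := by
  intro x hx y hy hxy
  by_contra hnadj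
  set T := S \ X with hT
  have hxT : x ∉ T := fun h => (Finset.mem_sdiff.mp h).2 hx
  have hyT : y ∉ T := fun h => (Finset.mem_sdiff.mp h).2 hy
  have haT : a ∈ T := ha
  have hbT : b ∈ T := hb
  have hsep' : ¬ (ind G T).Reachable b a := fun h => hsep h.symm
  obtain ⟨ua, huaT, huaAdj, huaR⟩ := sep_neighbor hX ha hx hsep (hmin x hx)
  obtain ⟨ua', hua'T, hua'Adj, hua'R⟩ := sep_neighbor hX ha hy hsep (hmin y hy)
  obtain ⟨ub, hubT, hubAdj, hubR⟩ := sep_neighbor hX hb hx hsep' ((hmin x hx).symm)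
  obtain ⟨ub', hub'T, hub'Adj, hub'R⟩ := sep_neighbor hX hb hy hsep' ((hmin y hy).symm)
  have huaC : ua ∈ comp G T a := mem_comp.mpr ⟨huaT, huaR⟩
  have hua'C : ua' ∈ comp G T a := mem_comp.mpr ⟨hua'T, hua'R⟩
  have hubC : ub ∈ comp G T b := mem_comp.mpr ⟨hubT, hubR⟩
  have hub'C : ub' ∈ comp G T b := mem_comp.mpr ⟨hub'T, hub'R⟩
  obtain ⟨PA, hPApath, hPAdist, hPAlen⟩ :=
    comp_geodesic haT hxT hyT hxy hnadj huaC hua'C huaAdj.symm hua'Adj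
  obtain ⟨PB, hPBpath, hPBdist, hPBlen⟩ :=
    comp_geodesic hbT hxT hyT hxy hnadj hubC hub'C hubAdj.symm hub'Adj
  have hxVA : x ∈ (insert x (insert y (comp G T a))) := Finset.mem_insert_self _ _
  have hyVA : y ∈ (insert x (insert y (comp G T a))) := Finset.mem_insert_of_mem (Finset.mem_insert_self _ _)
  have hxVB : x ∈ (insert x (insert y (comp G T b))) := Finset.mem_insert_self _ _
  have hyVB : y ∈ (insert x (insert y (comp G T b))) := Finset.mem_insert_of_mem (Finset.mem_insert_self _ _)
  have hVAmem : ∀ z, z ∈ (insert x (insert y (comp G T a))) ↔ (z = x ∨ z = y ∨ z ∈ comp G T a) := by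
    intro z; simp [Finset.mem_insert]
  have hVBmem : ∀ z, z ∈ (insert x (insert y (comp G T b))) ↔ (z = x ∨ z = y ∨ z ∈ comp G T b) := by
    intro z; simp [Finset.mem_insert]
  have hCaVA : ∀ z ∈ comp G T a, z ∈ (insert x (insert y (comp G T a))) := fun z hz => (hVAmem z).mpr (Or.inr (Or.inr hz))
  have hCbVB : ∀ z ∈ comp G T b, z ∈ (insert x (insert y (comp G T b))) := fun z hz => (hVBmem z).mpr (Or.inr (Or.inr hz))
  have hABdisj : ∀ z, z ∈ comp G T a → z ∈ comp G T b → False := fun z hza hzb =>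
    hsep ((mem_comp.mp hza).2.trans (mem_comp.mp hzb).2.symm)
  have hxyonly : ∀ z, z ∈ (insert x (insert y (comp G T a))) → z ∈ (insert x (insert y (comp G T b))) → z = x ∨ z = y := by
    intro z hzA hzB
    rcases (hVAmem z).mp hzA with rfl | rfl | hza
    · exact Or.inl rfl
    · exact Or.inr rfl
    · rcases (hVBmem z).mp hzB with rfl | rfl | hzb
      · exact Or.inl rfl
      · exact Or.inr rfl
      · exact absurd hzb (fun h => hABdisj z hza h)
  have hPAsupp : ∀ z ∈ PA.support, z ∈ (insert x (insert y (comp G T a))) := support_ind_subset PA hxVA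
  have hPBsupp : ∀ z ∈ PB.support, z ∈ (insert x (insert y (comp G T b))) := support_ind_subset PB hxVB
  -- transfer to G and build the cycle
  set PAg := PA.transfer G (ind_le_cond PA) with hPAg
  set PBg := PB.transfer G (ind_le_cond PB) with hPBg
  set w := PAg.append PBg.reverse with hw
  have hws : w.support = PA.support ++ PB.support.reverse.tail := by
    rw [hw, Walk.support_append, Walk.support_reverse, Walk.support_transfer,
      Walk.support_transfer]
  have hwe : w.edges = PA.edges ++ PB.edges.reverse := by
    rw [hw, Walk.edges_append, Walk.edges_reverse, Walk.edges_transfer, Walk.edges_transfer]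
  have hwlen : w.length = PA.length + PB.length := by
    rw [hw, Walk.length_append, Walk.length_reverse, Walk.length_transfer,
      Walk.length_transfer]
  -- edges of the two paths are disjoint
  have hedgedisj : ∀ e ∈ PA.edges, e ∈ PB.edges → False := by
    intro e heA heB
    induction e with
    | h z1 z2 =>
      have hadj := (PA.adj_of_mem_edges heA).2.2
      have hz1 : z1 = x ∨ z1 = y :=
        hxyonly z1 (hPAsupp _ (PA.fst_mem_support_of_mem_edges heA))
          (hPBsupp _ (PB.fst_mem_support_of_mem_edges heB))
      have hz2 : z2 = x ∨ z2 = y :=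
        hxyonly z2 (hPAsupp _ (PA.snd_mem_support_of_mem_edges heA))
          (hPBsupp _ (PB.snd_mem_support_of_mem_edges heB))
      rcases hz1 with rfl | rfl <;> rcases hz2 with rfl | rfl
      · exact hadj.ne rfl
      · exact hnadj hadj
      · exact hnadj hadj.symm
      · exact hadj.ne rfl
  have hPAsn : PA.support.Nodup := hPApath.support_nodup
  have hPBsn : PB.support.Nodup := hPBpath.support_nodup
  have hPAcons : PA.support = x :: PA.support.tail := PA.support_eq_cons
  have hBrev : PB.support.reverse = y :: PB.support.reverse.tail := by
    rw [← Walk.support_reverse]; exact PB.reverse.support_eq_cons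
  have hxnotail : x ∉ PA.support.tail := by
    rw [hPAcons] at hPAsn; exact (List.nodup_cons.mp hPAsn).1
  have hPAtn : PA.support.tail.Nodup := by
    rw [hPAcons] at hPAsn; exact (List.nodup_cons.mp hPAsn).2
  have hPBrn : PB.support.reverse.Nodup := List.nodup_reverse.mpr hPBsn
  have hynotail : y ∉ PB.support.reverse.tail := by
    rw [hBrev] at hPBrn; exact (List.nodup_cons.mp hPBrn).1
  have hPBtn : PB.support.reverse.tail.Nodup := by
    rw [hBrev] at hPBrn; exact (List.nodup_cons.mp hPBrn).2
  have hcycle : w.IsCycle := by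
    rw [Walk.isCycle_def]
    refine ⟨(Walk.isTrail_def _).mpr ?_, ?_, ?_⟩
    · rw [hwe]
      refine List.Nodup.append hPApath.isTrail.edges_nodup
        (List.nodup_reverse.mpr hPBpath.isTrail.edges_nodup) ?_
      intro e heA heB
      exact hedgedisj e heA (List.mem_reverse.mp heB)
    · intro hnil
      have : w.length = 0 := by rw [hnil]; rfl
      omega
    · have htail : w.support.tail = PA.support.tail ++ PB.support.reverse.tail := by
        rw [hws]; conv_lhs => rw [hPAcons]
        rfl
      rw [htail]
      refine List.Nodup.append hPAtn hPBtn ?_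
      intro z hzA hzB
      have hz1 : z ∈ PA.support := by rw [hPAcons]; exact List.mem_cons_of_mem _ hzA
      have hz2 : z ∈ PB.support :=
        List.mem_reverse.mp (List.mem_of_mem_tail hzB)
      rcases hxyonly z (hPAsupp _ hz1) (hPBsupp _ hz2) with rfl | rfl
      · exact hxnotail hzA
      · exact hynotail hzB
  obtain ⟨u₁, u₂, h1, h2, hadj, hne⟩ := hG x w hcycle (by omega)
  have hmemPAB : ∀ z ∈ w.support, z ∈ PA.support ∨ z ∈ PB.support := by
    intro z hz
    rw [hws, List.mem_append] at hz
    rcases hz with hz | hz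
    · exact Or.inl hz
    · exact Or.inr (List.mem_reverse.mp (List.mem_of_mem_tail hz))
  have hclass : ∀ z ∈ w.support, z ∈ (insert x (insert y (comp G T a))) ∨ z ∈ comp G T b := by
    intro z hz
    rcases hmemPAB z hz with h | h
    · exact Or.inl (hPAsupp _ h)
    · rcases (hVBmem z).mp (hPBsupp _ h) with rfl | rfl | h'
      · exact Or.inl hxVA
      · exact Or.inl hyVA
      · exact Or.inr h'
  have hVAtoPA : ∀ z ∈ w.support, z ∈ (insert x (insert y (comp G T a))) → z ∈ PA.support := by
    intro z hz hzVA
    rcases hmemPAB z hz with h | h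
    · exact h
    · rcases hxyonly z hzVA (hPBsupp _ h) with rfl | rfl
      · exact PA.start_mem_support
      · exact PA.end_mem_support
  have hVBtoPB : ∀ z ∈ w.support, z ∈ (insert x (insert y (comp G T b))) → z ∈ PB.support := by
    intro z hz hzVB
    rcases hmemPAB z hz with h | h
    · rcases hxyonly z (hPAsupp _ h) hzVB with rfl | rfl
      · exact PB.start_mem_support
      · exact PB.end_mem_support
    · exact h
  have LL : u₁ ∈ (insert x (insert y (comp G T a))) → u₂ ∈ (insert x (insert y (comp G T a))) → False := by
    intro hu1 hu2
    have he := geodesic_adj_edge PA hPAdist (hVAtoPA _ h1 hu1) (hVAtoPA _ h2 hu2)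
      ⟨hu1, hu2, hadj⟩
    exact hne (by rw [hwe]; exact List.mem_append_left _ he)
  have RR : u₁ ∈ (insert x (insert y (comp G T b))) → u₂ ∈ (insert x (insert y (comp G T b))) → False := by
    intro hu1 hu2
    have he := geodesic_adj_edge PB hPBdist (hVBtoPB _ h1 hu1) (hVBtoPB _ h2 hu2)
      ⟨hu1, hu2, hadj⟩
    exact hne (by rw [hwe]; exact List.mem_append_right _ (List.mem_reverse.mpr he))
  have hsepadj : ∀ z1 z2, z1 ∈ comp G T a → z2 ∈ comp G T b → G.Adj z1 z2 → False := by
    intro z1 z2 hz1 hz2 hadj'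
    have hadjT : (ind G T).Adj z1 z2 := ⟨(mem_comp.mp hz1).1, (mem_comp.mp hz2).1, hadj'⟩
    exact hsep ((mem_comp.mp hz1).2.trans (hadjT.reachable.trans (mem_comp.mp hz2).2.symm))
  rcases hclass u₁ h1 with hA1 | hB1 <;> rcases hclass u₂ h2 with hA2 | hB2
  · exact LL hA1 hA2
  · rcases (hVAmem u₁).mp hA1 with rfl | rfl | h
    · exact RR hxVB (hCbVB _ hB2)
    · exact RR hyVB (hCbVB _ hB2)
    · exact hsepadj _ _ h hB2 hadj
  · rcases (hVAmem u₂).mp hA2 with rfl | rfl | h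
    · exact RR (hCbVB _ hB1) hxVB
    · exact RR (hCbVB _ hB1) hyVB
    · exact hsepadj _ _ h hB1 hadj.symm
  · exact RR (hCbVB _ hB1) (hCbVB _ hB2)

/-- `v` is a simplicial vertex of the induced graph on `S`. -/
def Simp (G : SimpleGraph V) (S : Finset V) (v : V) : Prop :=
  v ∈ S ∧ ∀ u w, u ∈ S → w ∈ S → G.Adj u v → G.Adj w v → u ≠ w → G.Adj u w

lemma dirac (hG : IsChordal G) (S : Finset V) :
    ∀ a b, a ∈ S → b ∈ S → a ≠ b → ¬G.Adj a b →
    ∃ v w, v ∈ S ∧ w ∈ S ∧ v ≠ w ∧ ¬G.Adj v w ∧ Simp G S v ∧ Simp G S w := by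
  classical
  induction S using Finset.strongInductionOn with
  | _ S IH =>
  intro a b haS hbS hab hnadj
  have hne0 : ¬ (ind G (S \ (S \ {a, b}))).Reachable a b := by
    rintro ⟨w⟩
    cases w with
    | nil => exact hab rfl
    | @cons _ m _ h p =>
      have hm := h.2.1
      rcases Finset.mem_sdiff.mp hm with ⟨h1, h2⟩
      have hm' : m ∈ ({a, b} : Finset V) := by
        by_contra hm'
        exact h2 (Finset.mem_sdiff.mpr ⟨h1, hm'⟩)
      rcases Finset.mem_insert.mp hm' with rfl | hm'
      · exact h.2.2.ne rfl
      · rw [Finset.mem_singleton] at hm'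
        subst hm'
        exact hnadj h.2.2
  set F := ((S \ {a, b}).powerset).filter
    (fun X => ¬ (ind G (S \ X)).Reachable a b) with hF
  have hFne : F.Nonempty := by
    refine ⟨S \ {a, b}, Finset.mem_filter.mpr ⟨Finset.mem_powerset.mpr subset_rfl, hne0⟩⟩
  obtain ⟨X, hXF, hXmin⟩ := F.exists_min_image Finset.card hFne
  rw [hF, Finset.mem_filter, Finset.mem_powerset] at hXF
  obtain ⟨hXsub, hsep⟩ := hXF
  have hXS : X ⊆ S := hXsub.trans (Finset.sdiff_subset)
  have haX : a ∈ S \ X := Finset.mem_sdiff.mpr ⟨haS, fun h =>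
    (Finset.mem_sdiff.mp (hXsub h)).2 (by simp)⟩
  have hbX : b ∈ S \ X := Finset.mem_sdiff.mpr ⟨hbS, fun h =>
    (Finset.mem_sdiff.mp (hXsub h)).2 (by simp)⟩
  have hmin : ∀ x ∈ X, (ind G (S \ X.erase x)).Reachable a b := by
    intro x hx
    by_contra hre
    have hmem : X.erase x ∈ F := Finset.mem_filter.mpr
      ⟨Finset.mem_powerset.mpr ((Finset.erase_subset _ _).trans hXsub), hre⟩
    have hc := hXmin _ hmem
    have := Finset.card_erase_lt_of_mem hx
    omega
  have hXclique : ∀ x ∈ X, ∀ y ∈ X, x ≠ y → G.Adj x y :=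
    sep_clique hG hXS haX hbX hsep hmin
  set T := S \ X with hT
  have compSimp : ∀ c d, c ∈ T → d ∈ T → ¬(ind G T).Reachable c d →
      ∃ v ∈ comp G T c, Simp G S v := by
    intro c d hc hd hcd
    set A := comp G T c with hA
    set SA := A ∪ X with hSA
    have hAT : A ⊆ T := fun z hz => (mem_comp.mp hz).1
    have hdA : d ∉ SA := by
      intro hdSA
      rcases Finset.mem_union.mp hdSA with h | h
      · exact hcd (mem_comp.mp h).2
      · exact (Finset.mem_sdiff.mp hd).2 h
    have hSAS : SA ⊆ S := Finset.union_subset (hAT.trans Finset.sdiff_subset) hXS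
    have hssub : SA ⊂ S := ⟨hSAS, fun hS => hdA (hS (Finset.mem_sdiff.mp hd).1)⟩
    have hclosure : ∀ v ∈ A, ∀ u ∈ S, G.Adj u v → u ∈ SA := by
      intro v hv u hu hadj
      by_cases hX' : u ∈ X
      · exact Finset.mem_union_right _ hX'
      · exact Finset.mem_union_left _
          (comp_adj_closed hv (Finset.mem_sdiff.mpr ⟨hu, hX'⟩) hadj.symm)
    have hSimpLift : ∀ v ∈ A, Simp G SA v → Simp G S v := by
      intro v hvA hs
      refine ⟨hSAS hs.1, fun u w hu hw h1 h2 hne => ?_⟩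
      exact hs.2 u w (hclosure v hvA u hu h1) (hclosure v hvA w hw h2) h1 h2 hne
    have hcA : c ∈ A := mem_comp.mpr ⟨hc, Reachable.refl c⟩
    by_cases hclq : ∀ u ∈ SA, ∀ w ∈ SA, u ≠ w → G.Adj u w
    · exact ⟨c, hcA, hSimpLift c hcA
        ⟨Finset.mem_union_left _ hcA, fun u w hu hw _ _ hne => hclq u hu w hw hne⟩⟩
    · push_neg at hclq
      obtain ⟨u, hu, w', hw', hne, hnadj'⟩ := hclq
      obtain ⟨v, w2, hvSA, hw2SA, hvw, hnadjvw, hsv, hsw⟩ := IH SA hssub u w' hu hw' hne hnadj'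
      have hone : v ∈ A ∨ w2 ∈ A := by
        rcases Finset.mem_union.mp hvSA with h | h
        · exact Or.inl h
        · rcases Finset.mem_union.mp hw2SA with h' | h'
          · exact Or.inr h'
          · exact absurd (hXclique v h w2 h' hvw) hnadjvw
      rcases hone with h | h
      · exact ⟨v, h, hSimpLift v h hsv⟩
      · exact ⟨w2, h, hSimpLift w2 h hsw⟩
  obtain ⟨v, hvA, hsv⟩ := compSimp a b haX hbX hsep
  obtain ⟨w, hwB, hsw⟩ := compSimp b a hbX haX (fun h => hsep h.symm)
  have hvT : v ∈ T := (mem_comp.mp hvA).1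
  have hwT : w ∈ T := (mem_comp.mp hwB).1
  have hnadjvw : ¬ G.Adj v w := by
    intro hadj
    have hadjT : (ind G T).Adj v w := ⟨hvT, hwT, hadj⟩
    exact hsep ((mem_comp.mp hvA).2.trans (hadjT.reachable.trans (mem_comp.mp hwB).2.symm))
  have hvw : v ≠ w := by
    rintro rfl
    exact hsep ((mem_comp.mp hvA).2.trans (mem_comp.mp hwB).2.symm)
  exact ⟨v, w, hsv.1, hsw.1, hvw, hnadjvw, hsv, hsw⟩

lemma exists_simp (hG : IsChordal G) (S : Finset V) (hS : S.Nonempty) :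
    ∃ v, Simp G S v := by
  by_cases hclq : ∀ u ∈ S, ∀ w ∈ S, u ≠ w → G.Adj u w
  · obtain ⟨v, hv⟩ := hS
    exact ⟨v, hv, fun u w hu hw _ _ hne => hclq u hu w hw hne⟩
  · push_neg at hclq
    obtain ⟨u, hu, w, hw, hne, hnadj⟩ := hclq
    obtain ⟨v, _, _, _, _, _, hsv, _⟩ := dirac hG S u w hu hw hne hnadj
    exact ⟨v, hsv⟩

section MatrixHelpers
variable {W : Type*} [Fintype W] [DecidableEq W]

lemma herm_apply {Q : Matrix W W ℝ} (h : Q.IsHermitian) (u v : W) : Q u v = Q v u := by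
  conv_lhs => rw [← h]
  simp [Matrix.conjTranspose_apply]

lemma psd_diag_nonneg {Q : Matrix W W ℝ} (h : Q.PosSemidef) (v : W) : 0 ≤ Q v v := by
  have := h.dotProduct_mulVec_nonneg (Pi.single v 1)
  simpa [Matrix.mulVec_single, single_dotProduct] using this

lemma psd_col_zero {Q : Matrix W W ℝ} (h : Q.PosSemidef) {v : W} (hv : Q v v = 0) (u : W) :
    Q u v = 0 := by
  have h0 : dotProduct (star (Pi.single v (1:ℝ))) (Q.mulVec (Pi.single v 1)) = 0 := by
    simpa [Matrix.mulVec_single, single_dotProduct] using hv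
  have := (h.dotProduct_mulVec_zero_iff (Pi.single v 1)).mp h0
  have := congrFun this u
  simpa [Matrix.mulVec_single] using this

lemma outer_psd (c : W → ℝ) : (Matrix.of fun u w => c u * c w).PosSemidef := by
  have h := Matrix.posSemidef_conjTranspose_mul_self
    (Matrix.of (fun (_ : Unit) u => c u) : Matrix Unit W ℝ)
  convert h using 1
  ext u w
  simp [Matrix.mul_apply, Matrix.conjTranspose_apply]

end MatrixHelpers

open Matrix in
lemma quad_identity {W : Type*} [Fintype W] [DecidableEq W]
    {Q : Matrix W W ℝ} (hpsd : Q.PosSemidef) {v : W} {d : ℝ} (hd : Q v v = d)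
    (hdpos : 0 < d) (x : W → ℝ) :
    0 ≤ x ⬝ᵥ (Q *ᵥ x) - (((fun u => Q u v) ⬝ᵥ x) ^ 2) / d := by
  classical
  set c : W → ℝ := fun u => Q u v with hc
  set s : ℝ := c ⬝ᵥ x with hs
  set y : W → ℝ := x - (s / d) • (Pi.single v 1 : W → ℝ) with hy
  have hQsingle : Q *ᵥ Pi.single v 1 = c := by
    funext u
    simp [Matrix.mulVec_single, hc]
  have hxc : x ⬝ᵥ c = s := by rw [dotProduct_comm]
  have hsingleQx : Pi.single v 1 ⬝ᵥ (Q *ᵥ x) = s := by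
    rw [single_dotProduct, one_mul]
    show (Q *ᵥ x) v = s
    rw [hs]
    simp only [Matrix.mulVec, dotProduct, hc]
    exact Finset.sum_congr rfl fun w _ => by rw [herm_apply hpsd.1 v w]
  have hsinglec : Pi.single v 1 ⬝ᵥ c = d := by
    rw [single_dotProduct, one_mul, hc]; exact hd
  have h0 := hpsd.dotProduct_mulVec_nonneg y
  rw [show star y = y from funext fun i => star_trivial _] at h0
  have hexp : y ⬝ᵥ (Q *ᵥ y) = x ⬝ᵥ (Q *ᵥ x) - s ^ 2 / d := by
    rw [hy]
    rw [Matrix.mulVec_sub, Matrix.mulVec_smul, hQsingle]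
    rw [sub_dotProduct, dotProduct_sub, dotProduct_sub]
    rw [smul_dotProduct, smul_dotProduct, dotProduct_smul,
      dotProduct_smul]
    rw [hxc, hsingleQx, hsinglec]
    have hdne : d ≠ 0 := hdpos.ne'
    field_simp
    have hdd : d * d⁻¹ = 1 := mul_inv_cancel₀ hdne
    linear_combination (s ^ 2 * (d * d⁻¹ - 1)) * hdd
  rw [hexp] at h0
  exact h0

open Matrix in
lemma mat_decomp {t : ℕ} (hG : IsChordal G) (C : Fin t → Finset V)
    (hall : ∀ D : Finset V, G.IsClique (D : Set V) → ∃ k, D ⊆ C k)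
    (S : Finset V) :
    ∀ Q : Matrix V V ℝ, Q.PosSemidef →
      (∀ u w, u ∉ S → Q u w = 0) →
      (∀ u w, u ≠ w → ¬G.Adj u w → Q u w = 0) →
      ∃ M : Fin t → Matrix V V ℝ, (∀ k, (M k).PosSemidef) ∧
        (∀ k u w, u ∉ C k ∨ w ∉ C k → M k u w = 0) ∧ Q = ∑ k, M k := by
  classical
  induction S using Finset.strongInductionOn with
  | _ S IH =>
  intro Q hpsd hsupp hpat
  rcases S.eq_empty_or_nonempty with rfl | hSne
  · refine ⟨fun _ => 0, fun _ => Matrix.PosSemidef.zero, fun _ _ _ _ => rfl, ?_⟩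
    ext u w
    simp [hsupp u w (Finset.notMem_empty u)]
  obtain ⟨v, hvsimp⟩ := exists_simp hG S hSne
  obtain ⟨hvS, hsimp⟩ := hvsimp
  have herm : ∀ u w, Q u w = Q w u := herm_apply hpsd.1
  set c : V → ℝ := fun u => Q u v with hc
  set d : ℝ := Q v v with hdd
  set N : Finset V := insert v (S.filter (fun u => G.Adj u v)) with hN
  have hvN : v ∈ N := Finset.mem_insert_self _ _
  have hcsupp : ∀ u, u ∉ N → c u = 0 := by
    intro u hu
    have huv : u ≠ v := fun h => hu (h ▸ hvN)
    by_cases huS : u ∈ S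
    · refine hpat u v huv fun hadj => hu ?_
      exact Finset.mem_insert_of_mem (Finset.mem_filter.mpr ⟨huS, hadj⟩)
    · exact hsupp u v huS
  have hNclq : G.IsClique (N : Set V) := by
    intro x hx y hy hne
    simp only [hN, Finset.coe_insert, Set.mem_insert_iff, Finset.coe_filter,
      Set.mem_setOf_eq] at hx hy
    rcases hx with rfl | ⟨hxS, hxadj⟩
    · rcases hy with rfl | ⟨hyS, hyadj⟩
      · exact absurd rfl hne
      · exact hyadj.symm
    · rcases hy with rfl | ⟨hyS, hyadj⟩
      · exact hxadj
      · exact hsimp x y hxS hyS hxadj hyadj hne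
  obtain ⟨k₀, hk₀⟩ := hall N hNclq
  have hSerase : S.erase v ⊂ S := Finset.erase_ssubset hvS
  by_cases hd0 : d = 0
  · -- zero diagonal: column and row `v` vanish
    have hcol : ∀ u, Q u v = 0 := psd_col_zero hpsd hd0
    refine IH (S.erase v) hSerase Q hpsd ?_ hpat
    intro u w hu
    rcases eq_or_ne u v with rfl | hne
    · rw [herm]; exact hcol w
    · exact hsupp u w fun h => hu (Finset.mem_erase.mpr ⟨hne, h⟩)
  · have hdpos : 0 < d := lt_of_le_of_ne (psd_diag_nonneg hpsd v) (Ne.symm hd0)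
    have hsq : Real.sqrt d * Real.sqrt d = d := Real.mul_self_sqrt hdpos.le
    have hsqne : Real.sqrt d ≠ 0 := by positivity
    set cv : V → ℝ := fun u => c u / Real.sqrt d with hcv
    set P : Matrix V V ℝ := Matrix.of fun u w => cv u * cv w with hP
    have hPpsd : P.PosSemidef := outer_psd cv
    have hcvv : cv v = Real.sqrt d := by
      rw [hcv]
      show c v / Real.sqrt d = _
      rw [show c v = d from rfl, ← hsq]
      field_simp
      rw [Real.sqrt_sq (Real.sqrt_nonneg d)]
    have hPv : ∀ w, P v w = c w := by
      intro w
      show cv v * cv w = c w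
      rw [hcvv, hcv]
      show Real.sqrt d * (c w / Real.sqrt d) = c w
      field_simp
    set R : Matrix V V ℝ := Q - P with hR
    have hRherm : R.IsHermitian := hpsd.1.sub hPpsd.1
    have hRpsd : R.PosSemidef := by
      refine .of_dotProduct_mulVec_nonneg hRherm fun x => ?_
      rw [show star x = x from funext fun i => star_trivial _]
      have hq := quad_identity hpsd rfl hdpos x
      have hPx : x ⬝ᵥ (P *ᵥ x) = ((c ⬝ᵥ x) ^ 2) / d := by
        have h1 : P *ᵥ x = (cv ⬝ᵥ x) • cv := by
          funext u
          show ∑ w, (cv u * cv w) * x w = (∑ w, cv w * x w) * cv u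
          rw [Finset.sum_mul]
          exact Finset.sum_congr rfl fun w _ => by ring
        have h2 : cv ⬝ᵥ x = (c ⬝ᵥ x) / Real.sqrt d := by
          simp only [dotProduct, hcv, Finset.sum_div]
          exact Finset.sum_congr rfl fun w _ => by ring
        rw [h1, dotProduct_smul, smul_eq_mul, h2, dotProduct_comm x cv, h2]
        rw [div_mul_div_comm, hsq]
        ring
      have : x ⬝ᵥ (R *ᵥ x) = x ⬝ᵥ (Q *ᵥ x) - ((c ⬝ᵥ x) ^ 2) / d := by
        rw [hR, Matrix.sub_mulVec, dotProduct_sub, hPx]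
      rw [this]
      exact hq
    have hRv : ∀ w, R v w = 0 := by
      intro w
      show Q v w - P v w = 0
      rw [hPv, herm v w]
      show c w - c w = 0
      ring
    have hRsupp : ∀ u w, u ∉ S.erase v → R u w = 0 := by
      intro u w hu
      rcases eq_or_ne u v with rfl | hne
      · exact hRv w
      · have huS : u ∉ S := by
          intro huS
          exact hu (Finset.mem_erase.mpr ⟨hne, huS⟩)
        show Q u w - P u w = 0
        have hcu : cv u = 0 := by
          show Q u v / Real.sqrt d = 0
          rw [hsupp u v huS, zero_div]
        rw [hsupp u w huS]
        show 0 - cv u * cv w = 0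
        rw [hcu]; ring
    have hRpat : ∀ u w, u ≠ w → ¬G.Adj u w → R u w = 0 := by
      intro u w hne hnadj
      rcases eq_or_ne u v with rfl | huv
      · exact hRv w
      rcases eq_or_ne w v with rfl | hwv
      · rw [herm_apply hRherm]; exact hRv u
      by_cases huN : u ∈ N
      · by_cases hwN : w ∈ N
        · -- both in the clique N, distinct, hence adjacent: contradiction
          exact absurd (hNclq huN hwN hne) hnadj
        · show Q u w - P u w = 0
          rw [hpat u w hne hnadj]
          have : cv w = 0 := by
            rw [hcv]; show c w / Real.sqrt d = 0; rw [hcsupp w hwN]; simp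
          show 0 - cv u * cv w = 0
          rw [this]; ring
      · show Q u w - P u w = 0
        rw [hpat u w hne hnadj]
        have : cv u = 0 := by
          rw [hcv]; show c u / Real.sqrt d = 0; rw [hcsupp u huN]; simp
        show 0 - cv u * cv w = 0
        rw [this]; ring
    obtain ⟨M, hMpsd, hMsupp, hMsum⟩ := IH (S.erase v) hSerase R hRpsd hRsupp hRpat
    have hPsupp : ∀ u w, u ∉ C k₀ ∨ w ∉ C k₀ → P u w = 0 := by
      intro u w hu
      have hcv0 : ∀ z, z ∉ C k₀ → cv z = 0 := by
        intro z hz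
        have : z ∉ N := fun h => hz (hk₀ h)
        rw [hcv]; show c z / Real.sqrt d = 0; rw [hcsupp z this]; simp
      show cv u * cv w = 0
      rcases hu with hu | hu
      · rw [hcv0 u hu]; ring
      · rw [hcv0 w hu]; ring
    refine ⟨fun k => M k + if k = k₀ then P else 0, ?_, ?_, ?_⟩
    · intro k
      by_cases hk : k = k₀
      · simpa [hk] using (hMpsd k).add hPpsd
      · simpa [hk] using (hMpsd k).add Matrix.PosSemidef.zero
    · intro k u w hu
      show M k u w + (if k = k₀ then P else 0) u w = 0
      by_cases hk : k = k₀
      · rw [if_pos hk, hMsupp k u w hu, hPsupp u w (hk ▸ hu), add_zero]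
      · rw [if_neg hk, hMsupp k u w hu, Matrix.zero_apply, add_zero]
    · rw [Finset.sum_add_distrib, ← hMsum, Finset.sum_ite_eq' Finset.univ k₀ fun _ => P]
      simp [hR]

lemma clique_extend (G : SimpleGraph V) (D : Finset V) (hD : G.IsClique (D : Set V)) :
    ∃ E : Finset V, (G.IsClique (E : Set V) ∧ ∀ F : Finset V, G.IsClique (F : Set V) → E ⊆ F → F = E) ∧ D ⊆ E := by
  classical
  set FF := (Finset.univ : Finset V).powerset.filter
    (fun (E : Finset V) => G.IsClique (E : Set V) ∧ D ⊆ E) with hFF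
  have hDFF : D ∈ FF := Finset.mem_filter.mpr
    ⟨Finset.mem_powerset.mpr (Finset.subset_univ D), hD, subset_rfl⟩
  obtain ⟨E, hEFF, hEmax⟩ := FF.exists_max_image Finset.card ⟨D, hDFF⟩
  rw [hFF, Finset.mem_filter] at hEFF
  refine ⟨E, ⟨hEFF.2.1, fun F hF hEF => ?_⟩, hEFF.2.2⟩
  have hFFF : F ∈ FF := Finset.mem_filter.mpr
    ⟨Finset.mem_powerset.mpr (Finset.subset_univ F), hF, hEFF.2.2.trans hEF⟩
  exact (Finset.eq_of_subset_of_card_le hEF (hEmax F hFFF)).symm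

lemma sum_restrict {α : Type*} [AddCommMonoid α] {n : Type*} [Fintype n] [DecidableEq n]
    (D : Finset n) (g : n → α) (hg : ∀ u ∉ D, g u = 0) :
    ∑ u : n, g u = ∑ u : ↥D, g u.1 := by
  rw [Finset.sum_coe_sort D g]
  exact (Finset.sum_subset (Finset.subset_univ D) (fun x _ hx => hg x hx)).symm


/-- Sparse SOS decomposition (Theorem 3.3 of Wang–Magron–Lasserre): for a monomial basis
`B = {β_1,…,β_r}` and a chordal term sparsity pattern graph `Ḡ` with maximal cliques
`C_1,…,C_t`, a polynomial `f` has a PSD Gram matrix with sparsity pattern `Ḡ` iff it is a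
sum `f = Σ_k (x^{B_k})ᵀ Q_k x^{B_k}` with `Q_k ⪰ 0` indexed by the cliques. -/
theorem stmt7 {n r t : ℕ} (β : Fin r → (Fin n →₀ ℕ)) (hβ : Function.Injective β)
    (G : SimpleGraph (Fin r)) (hG : IsChordal G)
    (C : Fin t → Finset (Fin r))
    (hmax : ∀ k, IsMaxClique' G (C k))
    (hall : ∀ D : Finset (Fin r), IsMaxClique' G D → ∃ k, D = C k)
    (f : MvPolynomial (Fin n) ℝ) :
    (∃ Q : Matrix (Fin r) (Fin r) ℝ, Q.PosSemidef ∧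
        (∀ u v : Fin r, u ≠ v → ¬ G.Adj u v → Q u v = 0) ∧
        f = ∑ u : Fin r, ∑ v : Fin r, MvPolynomial.monomial (β u + β v) (Q u v)) ↔
    (∃ Qk : (k : Fin t) → Matrix ↥(C k) ↥(C k) ℝ,
        (∀ k, (Qk k).PosSemidef) ∧
        f = ∑ k : Fin t, ∑ u : ↥(C k), ∑ v : ↥(C k),
              MvPolynomial.monomial (β u.1 + β v.1) (Qk k u v)) := by
  classical
  constructor
  · rintro ⟨Q, hpsd, hpat, hf⟩
    have hall' : ∀ D : Finset (Fin r), G.IsClique (D : Set (Fin r)) → ∃ k, D ⊆ C k := by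
      intro D hD
      obtain ⟨E, hEmax, hDE⟩ := clique_extend G D hD
      obtain ⟨k, hk⟩ := hall E hEmax
      exact ⟨k, hk ▸ hDE⟩
    obtain ⟨M, hMpsd, hMsupp, hMsum⟩ := mat_decomp hG C hall' Finset.univ Q hpsd
      (fun u w h => absurd (Finset.mem_univ u) h) hpat
    refine ⟨fun k => (M k).submatrix Subtype.val Subtype.val,
      fun k => (hMpsd k).submatrix _, ?_⟩
    rw [hf]
    calc (∑ u : Fin r, ∑ v : Fin r, MvPolynomial.monomial (β u + β v) (Q u v))
        = ∑ u : Fin r, ∑ v : Fin r, ∑ k : Fin t,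
            MvPolynomial.monomial (β u + β v) (M k u v) := by
          refine Finset.sum_congr rfl fun u _ => Finset.sum_congr rfl fun v _ => ?_
          rw [hMsum, Matrix.sum_apply]
          exact map_sum (MvPolynomial.monomial (β u + β v)) _ _
      _ = ∑ u : Fin r, ∑ k : Fin t, ∑ v : Fin r,
            MvPolynomial.monomial (β u + β v) (M k u v) :=
          Finset.sum_congr rfl fun u _ => Finset.sum_comm
      _ = ∑ k : Fin t, ∑ u : Fin r, ∑ v : Fin r,
            MvPolynomial.monomial (β u + β v) (M k u v) := Finset.sum_comm
      _ = ∑ k : Fin t, ∑ u : ↥(C k), ∑ v : ↥(C k),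
            MvPolynomial.monomial (β u.1 + β v.1)
              ((M k).submatrix Subtype.val Subtype.val u v) := by
          refine Finset.sum_congr rfl fun k _ => ?_
          have hz1 : ∀ u, u ∉ C k →
              (∑ v : Fin r, MvPolynomial.monomial (β u + β v) (M k u v)) = 0 := by
            intro u hu
            refine Finset.sum_eq_zero fun v _ => ?_
            rw [hMsupp k u v (Or.inl hu)]
            exact map_zero _
          rw [sum_restrict (C k) _ hz1]
          refine Finset.sum_congr rfl fun u _ => ?_
          have hz2 : ∀ v, v ∉ C k →
              MvPolynomial.monomial (β u.1 + β v) (M k u.1 v) = 0 := by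
            intro v hv
            rw [hMsupp k u.1 v (Or.inr hv)]
            exact map_zero _
          rw [sum_restrict (C k) _ hz2]
          rfl
  · rintro ⟨Qk, hQk, hf⟩
    set E : Fin t → Matrix (Fin r) (Fin r) ℝ := fun k => Matrix.of fun u v =>
      if h : u ∈ C k ∧ v ∈ C k then Qk k ⟨u, h.1⟩ ⟨v, h.2⟩ else 0 with hE
    have hEapp : ∀ k u v (h : u ∈ C k ∧ v ∈ C k), E k u v = Qk k ⟨u, h.1⟩ ⟨v, h.2⟩ :=
      fun k u v h => dif_pos h
    have hEzero : ∀ k u v, ¬(u ∈ C k ∧ v ∈ C k) → E k u v = 0 :=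
      fun k u v h => dif_neg h
    have hEsym : ∀ k u v, E k v u = E k u v := by
      intro k u v
      by_cases h : u ∈ C k ∧ v ∈ C k
      · rw [hEapp k u v h, hEapp k v u ⟨h.2, h.1⟩]
        exact herm_apply (hQk k).1 _ _
      · rw [hEzero k u v h, hEzero k v u (fun h' => h ⟨h'.2, h'.1⟩)]
    have hEherm : ∀ k, (E k).IsHermitian := by
      intro k
      ext u v
      rw [Matrix.conjTranspose_apply, star_trivial]
      exact hEsym k u v
    have hquad : ∀ k (x : Fin r → ℝ),
        dotProduct x ((E k).mulVec x) =
          dotProduct (fun u : ↥(C k) => x u.1)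
            ((Qk k).mulVec (fun u : ↥(C k) => x u.1)) := by
      intro k x
      have hL : dotProduct x ((E k).mulVec x) =
          ∑ u : Fin r, ∑ v : Fin r, x u * (E k u v * x v) := by
        simp only [dotProduct, Matrix.mulVec, Finset.mul_sum]
      have hR : dotProduct (fun u : ↥(C k) => x u.1)
          ((Qk k).mulVec (fun u : ↥(C k) => x u.1)) =
          ∑ u : ↥(C k), ∑ v : ↥(C k), x u.1 * (Qk k u v * x v.1) := by
        simp only [dotProduct, Matrix.mulVec, Finset.mul_sum]
      rw [hL, hR]
      have hz1 : ∀ u, u ∉ C k → (∑ v : Fin r, x u * (E k u v * x v)) = 0 := by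
        intro u hu
        refine Finset.sum_eq_zero fun v _ => ?_
        rw [hEzero k u v (fun h => hu h.1)]
        ring
      rw [sum_restrict (C k) _ hz1]
      refine Finset.sum_congr rfl fun u _ => ?_
      have hz2 : ∀ v, v ∉ C k → x u.1 * (E k u.1 v * x v) = 0 := by
        intro v hv
        rw [hEzero k u.1 v (fun h => hv h.2)]
        ring
      rw [sum_restrict (C k) _ hz2]
      refine Finset.sum_congr rfl fun v _ => ?_
      rw [hEapp k u.1 v.1 ⟨u.2, v.2⟩]
    have hEpsd : ∀ k, (E k).PosSemidef := by
      intro k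
      refine .of_dotProduct_mulVec_nonneg (hEherm k) fun x => ?_
      rw [show star x = x from funext fun _ => star_trivial _, hquad k x]
      have h0 := (hQk k).dotProduct_mulVec_nonneg (fun u : ↥(C k) => x u.1)
      rwa [show star (fun u : ↥(C k) => x u.1) = (fun u : ↥(C k) => x u.1) from
        funext fun _ => star_trivial _] at h0
    refine ⟨∑ k, E k, ?_, ?_, ?_⟩
    · exact Finset.sum_induction E Matrix.PosSemidef (fun a b ha hb => ha.add hb)
        Matrix.PosSemidef.zero (fun k _ => hEpsd k)
    · intro u v hne hnadj
      rw [Matrix.sum_apply]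
      refine Finset.sum_eq_zero fun k _ => ?_
      exact hEzero k u v fun h =>
        hnadj ((hmax k).1 (Finset.mem_coe.mpr h.1) (Finset.mem_coe.mpr h.2) hne)
    · rw [hf]
      calc (∑ k : Fin t, ∑ u : ↥(C k), ∑ v : ↥(C k),
            MvPolynomial.monomial (β u.1 + β v.1) (Qk k u v))
          = ∑ k : Fin t, ∑ u : Fin r, ∑ v : Fin r,
              MvPolynomial.monomial (β u + β v) (E k u v) := by
            refine Finset.sum_congr rfl fun k _ => ?_
            have hz1 : ∀ u, u ∉ C k →
                (∑ v : Fin r, MvPolynomial.monomial (β u + β v) (E k u v)) = 0 := by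
              intro u hu
              refine Finset.sum_eq_zero fun v _ => ?_
              rw [hEzero k u v (fun h => hu h.1)]
              exact map_zero _
            rw [sum_restrict (C k) _ hz1]
            refine Finset.sum_congr rfl fun u _ => ?_
            have hz2 : ∀ v, v ∉ C k →
                MvPolynomial.monomial (β u.1 + β v) (E k u.1 v) = 0 := by
              intro v hv
              rw [hEzero k u.1 v (fun h => hv h.2)]
              exact map_zero _
            rw [sum_restrict (C k) _ hz2]
            refine Finset.sum_congr rfl fun v _ => ?_
            rw [hEapp k u.1 v.1 ⟨u.2, v.2⟩]
        _ = ∑ u : Fin r, ∑ k : Fin t, ∑ v : Fin r,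
              MvPolynomial.monomial (β u + β v) (E k u v) := Finset.sum_comm
        _ = ∑ u : Fin r, ∑ v : Fin r, ∑ k : Fin t,
              MvPolynomial.monomial (β u + β v) (E k u v) :=
            Finset.sum_congr rfl fun u _ => Finset.sum_comm
        _ = ∑ u : Fin r, ∑ v : Fin r,
              MvPolynomial.monomial (β u + β v) ((∑ k, E k) u v) := by
            refine Finset.sum_congr rfl fun u _ => Finset.sum_congr rfl fun v _ => ?_
            rw [Matrix.sum_apply]
            exact (map_sum (MvPolynomial.monomial (β u + β v)) _ _).symm
end

section
/- Let f ∈ ℝ[x_1,…,x_n] and suppose f = Σ_{i=1}^t f_i² for polynomials f_1, …, f_t ∈ ℝ[x_1,…,x_n]. Then for every i and every α ∈ supp(f_i), the point 2α ∈ ℝ^n lies in the convex hull (taken in ℝ^n) of supp(f); equivalently, supp(f_i) ⊆ ½·New(f) where New(f) is the Newton polytope of f. -/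
open MvPolynomial

/-- If `f = Σ_i f_i²`, then for every `i` and every `α ∈ supp(f_i)`, the point `2α` lies
in the Newton polytope of `f`, i.e. `supp(f_i) ⊆ ½·New(f)`. -/
theorem stmt13 {n t : ℕ} (f : MvPolynomial (Fin n) ℝ)
    (g : Fin t → MvPolynomial (Fin n) ℝ) (heq : f = ∑ i, (g i) ^ 2) :
    ∀ (i : Fin t), ∀ α ∈ (g i).support,
      (fun j : Fin n => (2 * α j : ℝ)) ∈
        convexHull ℝ
          ((fun β : Fin n →₀ ℕ => (fun j : Fin n => (β j : ℝ))) ''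
            ((f.support : Set (Fin n →₀ ℕ)))) := by
  intro i α hα
  set emb : (Fin n →₀ ℕ) → (Fin n → ℝ) := fun β => (fun j : Fin n => (β j : ℝ)) with hemb
  by_contra hnot
  have hfin : (emb '' (f.support : Set (Fin n →₀ ℕ))).Finite :=
    (f.support.finite_toSet).image _
  obtain ⟨ℓ, c, hc1, hc2⟩ := geometric_hahn_banach_closed_point
    (convex_convexHull ℝ _) (hfin.isClosed_convexHull ℝ) hnot
  set L : (Fin n →₀ ℕ) → ℝ := fun β => ℓ (emb β) with hL
  have Ladd : ∀ γ δ : Fin n →₀ ℕ, L (γ + δ) = L γ + L δ := by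
    intro γ δ
    have he : emb (γ + δ) = emb γ + emb δ := by
      funext j; simp [hemb]
    rw [hL]; simp only [he, map_add]
  set E : Finset (Fin n →₀ ℕ) := Finset.univ.biUnion (fun k => (g k).support) with hE
  have hαE : α ∈ E := Finset.mem_biUnion.2 ⟨i, Finset.mem_univ _, hα⟩
  have hEne : E.Nonempty := ⟨α, hαE⟩
  set M : ℝ := E.sup' hEne L with hM
  have hle : ∀ β ∈ E, L β ≤ M := fun β hβ => Finset.le_sup' L hβ
  set h : Fin t → MvPolynomial (Fin n) ℝ :=
    fun k => ∑ β ∈ (g k).support.filter (fun β => L β = M), monomial β (coeff β (g k)) with hh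
  have hcoeff : ∀ k β, coeff β (h k) = if L β = M then coeff β (g k) else 0 := by
    intro k β
    rw [hh]
    rw [coeff_sum]
    simp only [coeff_monomial]
    rw [Finset.sum_ite_eq' _ β (fun β' => coeff β' (g k))]
    by_cases hb : L β = M <;> by_cases hs : β ∈ (g k).support <;>
      simp_all [Finset.mem_filter, MvPolynomial.notMem_support_iff]
  have key : ∀ μ, L μ = 2 * M → coeff μ f = coeff μ (∑ k, h k ^ 2) := by
    intro μ hμ
    rw [heq, coeff_sum, coeff_sum]
    refine Finset.sum_congr rfl (fun k _ => ?_)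
    rw [pow_two, pow_two, coeff_mul, coeff_mul]
    refine Finset.sum_congr rfl (fun p hp => ?_)
    obtain ⟨γ, δ⟩ := p
    have hpd : γ + δ = μ := Finset.HasAntidiagonal.mem_antidiagonal.1 hp
    have hsum : L γ + L δ = 2 * M := by rw [← Ladd, hpd, hμ]
    by_cases hγ : L γ = M
    · have hδ : L δ = M := by linarith
      rw [hcoeff, hcoeff, if_pos hγ, if_pos hδ]
    · rw [hcoeff, hcoeff, if_neg hγ, zero_mul]
      by_cases hg : coeff γ (g k) = 0
      · rw [hg, zero_mul]
      · by_cases hg' : coeff δ (g k) = 0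
        · rw [hg', mul_zero]
        · exfalso
          have h1 : L γ ≤ M :=
            hle γ (Finset.mem_biUnion.2 ⟨k, Finset.mem_univ _, mem_support_iff.2 hg⟩)
          have h2 : L δ ≤ M :=
            hle δ (Finset.mem_biUnion.2 ⟨k, Finset.mem_univ _, mem_support_iff.2 hg'⟩)
          exact hγ (by linarith)
  -- some h k is nonzero
  obtain ⟨β₀, hβ₀E, hβ₀M⟩ := Finset.exists_mem_eq_sup' hEne L
  obtain ⟨k₀, _, hβ₀k⟩ := Finset.mem_biUnion.1 hβ₀E
  have hk₀ : h k₀ ≠ 0 := by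
    intro h0
    have := hcoeff k₀ β₀
    rw [h0, if_pos hβ₀M.symm] at this
    exact mem_support_iff.1 hβ₀k this.symm
  have hne0 : (∑ k, h k ^ 2) ≠ 0 := by
    intro h0
    apply hk₀
    apply MvPolynomial.funext
    intro x
    have hx : ∑ k, (eval x (h k)) ^ 2 = 0 := by
      have := congrArg (eval x) h0
      simpa [map_sum, map_pow] using this
    have hall := (Finset.sum_eq_zero_iff_of_nonneg
      (fun k _ => sq_nonneg (eval x (h k)))).1 hx k₀ (Finset.mem_univ _)
    simpa using pow_eq_zero_iff (n := 2) (by norm_num) |>.1 hall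
  obtain ⟨μ, hμ⟩ := MvPolynomial.support_nonempty.2 hne0
  have hμ2M : L μ = 2 * M := by
    by_contra hneq
    apply mem_support_iff.1 hμ
    rw [coeff_sum]
    refine Finset.sum_eq_zero (fun k _ => ?_)
    rw [pow_two, coeff_mul]
    refine Finset.sum_eq_zero (fun p hp => ?_)
    obtain ⟨γ, δ⟩ := p
    rw [hcoeff, hcoeff]
    by_cases hγ : L γ = M
    · by_cases hδ : L δ = M
      · exfalso
        apply hneq
        have hpd : γ + δ = μ := Finset.HasAntidiagonal.mem_antidiagonal.1 hp
        rw [← hpd, Ladd, hγ, hδ]; ring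
      · rw [if_neg hδ, mul_zero]
    · rw [if_neg hγ, zero_mul]
  have hμf : μ ∈ f.support :=
    mem_support_iff.2 (by rw [key μ hμ2M]; exact mem_support_iff.1 hμ)
  have h1 : L μ < c := hc1 _ (subset_convexHull ℝ _ ⟨μ, hμf, rfl⟩)
  have h2 : c < ℓ (fun j => (2 : ℝ) * α j) := hc2
  have h3 : ℓ (fun j => (2 : ℝ) * α j) = 2 * L α := by
    have he : (fun j : Fin n => (2 : ℝ) * α j) = (2 : ℝ) • emb α := by
      funext j; simp [hemb, smul_eq_mul]
    rw [he, map_smul, hL, smul_eq_mul]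
  have h4 : L α ≤ M := hle α hαE
  linarith
end
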